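/- arXiv:1904.03304 — 6 statements merged into one kernel-verified Lean document; each statement's English description precedes it below -/
import Mathlib

section
/- If A and B are n×n Hermitian positive semidefinite matrices with A ⪰ B (i.e., A − B positive semidefinite), then tr_k[A] ≥ tr_k[B]; if A ≻ B then tr_k[A] > tr_k[B]. -/
noncomputable section
open scoped Matrix ComplexOrder

def trK {n : ℕ} (k : ℕ) (M : Matrix (Fin n) (Fin n) ℂ) : ℂ :=
  ∑ s ∈ Finset.powersetCard k (Finset.univ : Finset (Fin n)),
    (M.submatrix (Subtype.val : {i : Fin n // i ∈ s} → Fin n)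
      (Subtype.val : {i : Fin n // i ∈ s} → Fin n)).det

def mpow {n : ℕ} (A : Matrix (Fin n) (Fin n) ℂ) (t : ℝ) : Matrix (Fin n) (Fin n) ℂ :=
  cfc (fun x : ℝ => x ^ t) A

def mexp {n : ℕ} (A : Matrix (Fin n) (Fin n) ℂ) : Matrix (Fin n) (Fin n) ℂ :=
  cfc Real.exp A

def mlog {n : ℕ} (A : Matrix (Fin n) (Fin n) ℂ) : Matrix (Fin n) (Fin n) ℂ :=
  cfc Real.log A

section AuxLemmas
open Matrix

variable {m : Type*} [Fintype m] [DecidableEq m]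

/-- det of PSD matrix is a nonneg real. -/
lemma psd_det_real {M : Matrix m m ℂ} (hM : M.PosSemidef) :
    0 ≤ (det M).re ∧ (det M).im = 0 := by
  rw [hM.1.det_eq_prod_eigenvalues]
  constructor
  · norm_cast
    exact Finset.prod_nonneg fun i _ => hM.eigenvalues_nonneg i
  · norm_cast

/-- conjugation preserving PD when mulVec is injective on nonzeros -/
lemma posDef_conj {l : Type*} [Fintype l] {D : Matrix m m ℂ} (hD : D.PosDef)
    (C : Matrix m l ℂ) (hC : ∀ x : l → ℂ, x ≠ 0 → C *ᵥ x ≠ 0) :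
    (Cᴴ * D * C).PosDef := by
  refine posDef_iff_dotProduct_mulVec.mpr ⟨isHermitian_conjTranspose_mul_mul C hD.1, fun x hx => ?_⟩
  simpa only [star_mulVec, dotProduct_mulVec, vecMul_vecMul] using hD.dotProduct_mulVec_pos (hC x hx)

lemma posDef_submatrix {l : Type*} [Fintype l] [DecidableEq l] {M : Matrix m m ℂ}
    (hM : M.PosDef) (e : l → m) (he : Function.Injective e) :
    (M.submatrix e e).PosDef := by
  rw [(by simp : M = 1 * M * 1), submatrix_mul (he₂ := Function.bijective_id),
    submatrix_mul (he₂ := Function.bijective_id), submatrix_id_id]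
  have : (Matrix.submatrix (1 : Matrix m m ℂ) e id) = ((1 : Matrix m m ℂ).submatrix id e)ᴴ := by
    simp [conjTranspose_submatrix]
  rw [this]
  refine posDef_conj hM _ ?_
  intro x hx
  obtain ⟨i₀, hi₀⟩ := Function.ne_iff.mp hx
  intro hzero
  apply hi₀
  have := congrFun hzero (e i₀)
  simpa [mulVec, dotProduct, one_apply, he.eq_iff, Finset.sum_ite_eq] using this

lemma psd_posDef_of_det_ne_zero {M : Matrix m m ℂ} (hM : M.PosSemidef)
    (hd : M.det ≠ 0) : M.PosDef := by
  refine posDef_iff_dotProduct_mulVec.mpr ⟨hM.1, fun x hx => lt_of_le_of_ne (hM.dotProduct_mulVec_nonneg x) fun h => hx ?_⟩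
  have h0 : M *ᵥ x = 0 := (hM.dotProduct_mulVec_zero_iff x).mp h.symm
  have hinj := mulVec_injective_iff_isUnit.mpr ((isUnit_iff_isUnit_det M).mpr hd.isUnit)
  have := hinj (a₁ := x) (a₂ := 0) (by simpa using h0)
  exact this

lemma det_one_add_eq {M : Matrix m m ℂ} (hM : M.IsHermitian) :
    det (1 + M) = ((∏ i, (1 + hM.eigenvalues i) : ℝ) : ℂ) := by
  have hU := (Matrix.mem_unitaryGroup_iff).mp (hM.eigenvectorUnitary).2
  conv_lhs => rw [hM.spectral_theorem, Unitary.conjStarAlgAut_apply]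
  have h1 : (1 : Matrix m m ℂ) + (hM.eigenvectorUnitary : Matrix m m ℂ) *
      diagonal (RCLike.ofReal ∘ hM.eigenvalues) * star (hM.eigenvectorUnitary : Matrix m m ℂ)
      = (hM.eigenvectorUnitary : Matrix m m ℂ) * (1 + diagonal (RCLike.ofReal ∘ hM.eigenvalues))
        * star (hM.eigenvectorUnitary : Matrix m m ℂ) := by
    rw [Matrix.mul_add, Matrix.add_mul, Matrix.mul_one, hU]
  rw [h1, det_mul_right_comm, hU, Matrix.one_mul]
  have : (1 : Matrix m m ℂ) + diagonal (RCLike.ofReal ∘ hM.eigenvalues)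
      = diagonal (fun i => 1 + (hM.eigenvalues i : ℂ)) := by
    rw [← diagonal_one, diagonal_add]
    rfl
  rw [this, det_diagonal]
  push_cast
  rfl

lemma det_factor {B D : Matrix m m ℂ} (hB : B.PosDef) (hD : D.PosSemidef) :
    ∃ M : Matrix m m ℂ, M.PosSemidef ∧ (D.PosDef → M.PosDef) ∧
      det (B + D) = det B * det (1 + M) := by
  set S := (open MatrixOrder in CFC.sqrt B) with hSdef
  have hS : S.PosSemidef := (open MatrixOrder in Matrix.nonneg_iff_posSemidef.mp (CFC.sqrt_nonneg B))
  have hSS : S * S = B := (open MatrixOrder in CFC.sqrt_mul_sqrt_self B hB.posSemidef.nonneg)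
  have hdetS : S.det ≠ 0 := by
    intro h
    have h2 := congrArg det hSS
    rw [det_mul, h, mul_zero] at h2
    exact hB.det_pos.ne' h2.symm
  have hSinvH : (S⁻¹)ᴴ = S⁻¹ := (hS.1.inv).eq
  refine ⟨(S⁻¹)ᴴ * D * S⁻¹, hD.conjTranspose_mul_mul_same S⁻¹, ?_, ?_⟩
  · intro hDpd
    refine posDef_conj hDpd S⁻¹ ?_
    intro x hx
    have hU : IsUnit (S⁻¹) := by
      rw [Matrix.isUnit_nonsing_inv_iff]
      exact (isUnit_iff_isUnit_det S).mpr hdetS.isUnit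
    have hinj := mulVec_injective_iff_isUnit.mpr hU
    intro h0
    exact hx (hinj (by simpa using h0))
  · have key : B + D = S * (1 + ((S⁻¹)ᴴ * D * S⁻¹)) * S := by
      rw [hSinvH, Matrix.mul_add, Matrix.add_mul, Matrix.mul_one, hSS]
      congr 1
      simp only [Matrix.mul_assoc]
      rw [nonsing_inv_mul S hdetS.isUnit, Matrix.mul_one, ← Matrix.mul_assoc,
        mul_nonsing_inv S hdetS.isUnit, Matrix.one_mul]
    rw [key, det_mul, det_mul, ← hSS, det_mul]
    ring

lemma det_re_le {A B : Matrix m m ℂ} (hB : B.PosSemidef) (hAB : (A - B).PosSemidef) :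
    (det B).re ≤ (det A).re := by
  have hBA : B + (A - B) = A := by abel
  have hA : A.PosSemidef := by
    have := hAB.add hB
    rwa [sub_add_cancel] at this
  by_cases hd : B.det = 0
  · rw [hd]
    simpa using (psd_det_real hA).1
  · have hBpd := psd_posDef_of_det_ne_zero hB hd
    obtain ⟨M, hM, -, hdet⟩ := det_factor hBpd hAB
    rw [hBA] at hdet
    have hone := det_one_add_eq hM.1
    have hr1 : (1:ℝ) ≤ ∏ i, (1 + hM.1.eigenvalues i) := by
      calc (1:ℝ) = ∏ _i : m, 1 := by simp
        _ ≤ _ := Finset.prod_le_prod (fun i _ => zero_le_one)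
            (fun i _ => le_add_of_nonneg_right (hM.eigenvalues_nonneg i))
    have him : det B = ((det B).re : ℂ) := by
      apply Complex.ext
      · rfl
      · simpa using (psd_det_real hB).2
    have hpos : 0 < (det B).re := (Complex.lt_def.mp hBpd.det_pos).1
    rw [hdet, hone, him, ← Complex.ofReal_mul]
    simp only [Complex.ofReal_re]
    exact le_mul_of_one_le_right hpos.le hr1

lemma det_re_lt [Nonempty m] {A B : Matrix m m ℂ} (hB : B.PosSemidef) (hAB : (A - B).PosDef) :
    (det B).re < (det A).re := by
  have hBA : B + (A - B) = A := by abel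
  have hA : A.PosDef := by
    have := hAB.add_posSemidef hB
    rwa [sub_add_cancel] at this
  by_cases hd : B.det = 0
  · rw [hd]
    simpa using (Complex.lt_def.mp hA.det_pos).1
  · have hBpd := psd_posDef_of_det_ne_zero hB hd
    obtain ⟨M, hM, hMpd', hdet⟩ := det_factor hBpd hAB.posSemidef
    have hMpd := hMpd' hAB
    rw [hBA] at hdet
    have hone := det_one_add_eq hM.1
    have hr1 : (1:ℝ) < ∏ i, (1 + hM.1.eigenvalues i) := by
      calc (1:ℝ) = ∏ _i : m, 1 := by simp
        _ < _ := Finset.prod_lt_prod_of_nonempty (fun i _ => zero_lt_one)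
            (fun i _ => lt_add_of_pos_right _ (hMpd.eigenvalues_pos i)) Finset.univ_nonempty
    have him : det B = ((det B).re : ℂ) := by
      apply Complex.ext
      · rfl
      · simpa using (psd_det_real hB).2
    have hpos : 0 < (det B).re := (Complex.lt_def.mp hBpd.det_pos).1
    rw [hdet, hone, him, ← Complex.ofReal_mul]
    simp only [Complex.ofReal_re]
    exact lt_mul_of_one_lt_right hpos hr1

end AuxLemmas

/-- monotonicity of the k-trace w.r.t. the Löwner order. -/
theorem ktrace_monotone {n k : ℕ} (hk : 1 ≤ k) (hkn : k ≤ n)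
    (A B : Matrix (Fin n) (Fin n) ℂ) (hA : A.PosSemidef) (hB : B.PosSemidef) :
    ((A - B).PosSemidef → (trK k B).re ≤ (trK k A).re) ∧
    ((A - B).PosDef → (trK k B).re < (trK k A).re) := by
  constructor
  · intro hAB
    simp only [trK, Complex.re_sum]
    refine Finset.sum_le_sum fun s _ => ?_
    have hBs := hB.submatrix (Subtype.val : {i : Fin n // i ∈ s} → Fin n)
    have hDs : ((A.submatrix (Subtype.val : {i : Fin n // i ∈ s} → Fin n)
          (Subtype.val : {i : Fin n // i ∈ s} → Fin n))
        - B.submatrix (Subtype.val : {i : Fin n // i ∈ s} → Fin n)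
          (Subtype.val : {i : Fin n // i ∈ s} → Fin n)).PosSemidef := by
      have h := hAB.submatrix (Subtype.val : {i : Fin n // i ∈ s} → Fin n)
      have heq : (A - B).submatrix (Subtype.val : {i : Fin n // i ∈ s} → Fin n)
            (Subtype.val : {i : Fin n // i ∈ s} → Fin n)
          = A.submatrix (Subtype.val : {i : Fin n // i ∈ s} → Fin n)
              (Subtype.val : {i : Fin n // i ∈ s} → Fin n)
            - B.submatrix (Subtype.val : {i : Fin n // i ∈ s} → Fin n)
              (Subtype.val : {i : Fin n // i ∈ s} → Fin n) := by
        ext i j; simp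
      rwa [heq] at h
    exact det_re_le hBs hDs
  · intro hAB
    have hne : (Finset.powersetCard k (Finset.univ : Finset (Fin n))).Nonempty :=
      Finset.powersetCard_nonempty.mpr (by simpa using hkn)
    simp only [trK, Complex.re_sum]
    refine Finset.sum_lt_sum_of_nonempty hne fun s hs => ?_
    have hcard : s.card = k := (Finset.mem_powersetCard_univ.mp hs)
    have : Nonempty {i : Fin n // i ∈ s} := by
      have hpos : 0 < s.card := by omega
      obtain ⟨i, hi⟩ := Finset.card_pos.mp hpos
      exact ⟨⟨i, hi⟩⟩
    have hBs := hB.submatrix (Subtype.val : {i : Fin n // i ∈ s} → Fin n)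
    have hDs : ((A.submatrix (Subtype.val : {i : Fin n // i ∈ s} → Fin n)
          (Subtype.val : {i : Fin n // i ∈ s} → Fin n))
        - B.submatrix (Subtype.val : {i : Fin n // i ∈ s} → Fin n)
          (Subtype.val : {i : Fin n // i ∈ s} → Fin n)).PosDef := by
      have h := posDef_submatrix hAB (Subtype.val : {i : Fin n // i ∈ s} → Fin n)
        Subtype.val_injective
      have heq : (A - B).submatrix (Subtype.val : {i : Fin n // i ∈ s} → Fin n)
            (Subtype.val : {i : Fin n // i ∈ s} → Fin n)
          = A.submatrix (Subtype.val : {i : Fin n // i ∈ s} → Fin n)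
              (Subtype.val : {i : Fin n // i ∈ s} → Fin n)
            - B.submatrix (Subtype.val : {i : Fin n // i ∈ s} → Fin n)
              (Subtype.val : {i : Fin n // i ∈ s} → Fin n) := by
        ext i j; simp
      rwa [heq] at h
    exact det_re_lt hBs hDs
end
end

section
/- k-trace Peierls–Bogoliubov inequality: the function A ↦ log tr_k[exp(A)] is convex on the space of n×n Hermitian matrices. -/
noncomputable section
open scoped Matrix ComplexOrder

open Finset Matrix Equiv

namespace KPB
variable {R : Type*} [CommRing R] {k n : ℕ}

local notation "ε" σ:max => ((Equiv.Perm.sign σ : ℤ) : R)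

lemma det_mul_aux' {X : Matrix (Fin k) (Fin n) R} {Y : Matrix (Fin n) (Fin k) R}
    {p : Fin k → Fin n} (H : ¬Function.Injective p) :
    (∑ σ : Equiv.Perm (Fin k), ε σ * ∏ x, X (σ x) (p x) * Y (p x) x) = 0 := by
  obtain ⟨i, j, hpij, hij⟩ : ∃ i j, p i = p j ∧ i ≠ j := by
    rw [Function.Injective] at H
    push_neg at H
    obtain ⟨i, j, h1, h2⟩ := H
    exact ⟨i, j, h1, h2⟩
  exact Finset.sum_involution (fun σ _ => σ * Equiv.swap i j)
    (fun σ _ => by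
      have : (∏ x, X (σ x) (p x)) = ∏ x, X ((σ * Equiv.swap i j) x) (p x) :=
        Fintype.prod_equiv (Equiv.swap i j) _ _ (by simp [Equiv.apply_swap_eq_self hpij])
      simp [this, Equiv.Perm.sign_swap hij, -Equiv.Perm.sign_swap', Finset.prod_mul_distrib])
    (fun σ _ _ => (not_congr Equiv.mul_swap_eq_iff).mpr hij) (fun _ _ => Finset.mem_univ _)
    fun σ _ => Equiv.mul_swap_involutive i j σ

lemma det_expand_pairs (X Y : Matrix (Fin k) (Fin k) R) :
    det (X * Y) = ∑ τ : Equiv.Perm (Fin k), ∑ σ : Equiv.Perm (Fin k),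
      ε σ * ∏ i, X (σ i) (τ i) * Y (τ i) i :=
  calc
    det (X * Y) = ∑ p : Fin k → Fin k, ∑ σ : Equiv.Perm (Fin k),
        ε σ * ∏ i, X (σ i) (p i) * Y (p i) i := by
      simp only [det_apply', mul_apply, prod_univ_sum, mul_sum, Fintype.piFinset_univ]
      rw [Finset.sum_comm]
    _ = ∑ p : Fin k → Fin k with Function.Bijective p, ∑ σ : Equiv.Perm (Fin k),
        ε σ * ∏ i, X (σ i) (p i) * Y (p i) i := by
      refine (Finset.sum_subset (Finset.filter_subset _ _) fun f _ hbij ↦ det_mul_aux' ?_).symm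
      simp only [true_and, Finset.mem_filter, Finset.mem_univ] at hbij
      intro hinj
      exact hbij ((Finite.injective_iff_bijective).mp hinj)
    _ = ∑ τ : Equiv.Perm (Fin k), ∑ σ : Equiv.Perm (Fin k),
        ε σ * ∏ i, X (σ i) (τ i) * Y (τ i) i :=
      Finset.sum_bij (fun p h ↦ Equiv.ofBijective p (Finset.mem_filter.1 h).2)
        (fun _ _ ↦ Finset.mem_univ _)
        (fun _ _ _ _ h ↦ by injection h)
        (fun b _ ↦ ⟨b, Finset.mem_filter.2 ⟨Finset.mem_univ _, b.bijective⟩,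
          Equiv.coe_fn_injective rfl⟩) fun _ _ ↦ rfl

/-- column-minor: determinant of the submatrix of `X` given by columns `t`. -/
noncomputable def cmin (X : Matrix (Fin k) (Fin n) R) (t : Finset (Fin n)) : R :=
  if h : t.card = k then (X.submatrix id (t.orderEmbOfFin h)).det else 0

/-- row-minor: determinant of the submatrix of `Y` given by rows `t`. -/
noncomputable def rmin (Y : Matrix (Fin n) (Fin k) R) (t : Finset (Fin n)) : R :=
  if h : t.card = k then (Y.submatrix (t.orderEmbOfFin h) id).det else 0

theorem cauchy_binet (X : Matrix (Fin k) (Fin n) R) (Y : Matrix (Fin n) (Fin k) R) :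
    det (X * Y) = ∑ t ∈ Finset.powersetCard k (Finset.univ : Finset (Fin n)),
      cmin X t * rmin Y t := by
  have step1 : det (X * Y) = ∑ p : Fin k → Fin n, ∑ σ : Equiv.Perm (Fin k),
      ε σ * ∏ i, X (σ i) (p i) * Y (p i) i := by
    simp only [det_apply', mul_apply, prod_univ_sum, mul_sum, Fintype.piFinset_univ]
    rw [Finset.sum_comm]
  have step2 : (∑ p : Fin k → Fin n, ∑ σ : Equiv.Perm (Fin k),
      ε σ * ∏ i, X (σ i) (p i) * Y (p i) i)
      = ∑ p : Fin k → Fin n with Function.Injective p, ∑ σ : Equiv.Perm (Fin k),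
      ε σ * ∏ i, X (σ i) (p i) * Y (p i) i := by
    refine (Finset.sum_subset (Finset.filter_subset _ _) fun f _ hinj ↦ det_mul_aux' ?_).symm
    simpa only [true_and, Finset.mem_filter, Finset.mem_univ] using hinj
  -- group by image
  have hmaps : ∀ p ∈ Finset.univ.filter (fun p : Fin k → Fin n => Function.Injective p),
      Finset.image p Finset.univ ∈ Finset.powersetCard k (Finset.univ : Finset (Fin n)) := by
    intro p hp
    rw [Finset.mem_filter] at hp
    rw [Finset.mem_powersetCard_univ, Finset.card_image_of_injective _ hp.2, Finset.card_univ,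
      Fintype.card_fin]
  have step3 : (∑ p : Fin k → Fin n with Function.Injective p, ∑ σ : Equiv.Perm (Fin k),
      ε σ * ∏ i, X (σ i) (p i) * Y (p i) i)
      = ∑ t ∈ Finset.powersetCard k (Finset.univ : Finset (Fin n)),
        ∑ p ∈ (Finset.univ.filter (fun p : Fin k → Fin n => Function.Injective p)).filter
          (fun p => Finset.image p Finset.univ = t),
        ∑ σ : Equiv.Perm (Fin k), ε σ * ∏ i, X (σ i) (p i) * Y (p i) i :=
    (Finset.sum_fiberwise_of_maps_to hmaps _).symm
  rw [step1, step2, step3]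
  refine Finset.sum_congr rfl fun t ht => ?_
  have htc : t.card = k := Finset.mem_powersetCard_univ.mp ht
  set e : Fin k → Fin n := ⇑(t.orderEmbOfFin htc) with he
  have hemem : ∀ i, e i ∈ t := fun i => Finset.orderEmbOfFin_mem t htc i
  have heinj : Function.Injective e := (t.orderEmbOfFin htc).injective
  have himg : Finset.image e Finset.univ = t := by
    ext j
    simp only [Finset.mem_image, Finset.mem_univ, true_and]
    constructor
    · rintro ⟨i, rfl⟩; exact hemem i
    · intro hj
      have : j ∈ Set.range e := by rw [Finset.range_orderEmbOfFin]; exact_mod_cast hj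
      exact this
  -- bijection between Perm (Fin k) and the fiber
  have key : (∑ p ∈ (Finset.univ.filter (fun p : Fin k → Fin n => Function.Injective p)).filter
          (fun p => Finset.image p Finset.univ = t),
        ∑ σ : Equiv.Perm (Fin k), ε σ * ∏ i, X (σ i) (p i) * Y (p i) i)
      = ∑ τ : Equiv.Perm (Fin k),
        ∑ σ : Equiv.Perm (Fin k), ε σ * ∏ i, X (σ i) (e (τ i)) * Y (e (τ i)) i := by
    refine (Finset.sum_bij (fun (τ : Equiv.Perm (Fin k)) _ => e ∘ τ) ?_ ?_ ?_ ?_).symm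
    · intro τ _
      simp only [Finset.mem_filter, Finset.mem_univ, true_and]
      refine ⟨heinj.comp τ.injective, ?_⟩
      rw [show Finset.image (e ∘ τ) Finset.univ = Finset.image e (Finset.image τ Finset.univ) by
          rw [Finset.image_image]]
      rw [Finset.image_univ_equiv]
      exact himg
    · intro τ1 _ τ2 _ h
      exact Equiv.ext fun i => heinj (congrFun h i)
    · intro p hp
      rw [Finset.mem_filter, Finset.mem_filter] at hp
      obtain ⟨⟨-, hpinj⟩, hpimg⟩ := hp
      have hmem : ∀ i, p i ∈ t := by
        intro i; rw [← hpimg]; exact Finset.mem_image_of_mem p (Finset.mem_univ i)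
      have hτinj : Function.Injective
          (fun i => (t.orderIsoOfFin htc).symm ⟨p i, hmem i⟩) := by
        intro a b hab
        apply hpinj
        have := congrArg (t.orderIsoOfFin htc) hab
        simp only [OrderIso.apply_symm_apply] at this
        exact congrArg Subtype.val this
      refine ⟨Equiv.ofBijective _ ((Finite.injective_iff_bijective).mp hτinj),
        Finset.mem_univ _, ?_⟩
      funext i
      show e (Equiv.ofBijective _ ((Finite.injective_iff_bijective).mp hτinj) i) = p i
      simp only [Equiv.ofBijective_apply, he]
      rw [← Finset.coe_orderIsoOfFin_apply]
      simp
    · intro τ _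
      rfl
  rw [key]
  have expand := det_expand_pairs (X.submatrix id e) (Y.submatrix e id)
  simp only [Matrix.submatrix_apply, id_eq] at expand
  rw [← expand, Matrix.det_mul, cmin, rmin, dif_pos htc, dif_pos htc]
  done


/-- the minor of `A` with rows `s` and columns `t`. -/
noncomputable def mino (k : ℕ) (A : Matrix (Fin n) (Fin n) R) (s t : Finset (Fin n)) : R :=
  if h : s.card = k ∧ t.card = k then
    (A.submatrix (s.orderEmbOfFin h.1) (t.orderEmbOfFin h.2)).det else 0

lemma mino_eq (A : Matrix (Fin n) (Fin n) R) {s t : Finset (Fin n)} (hs : s.card = k)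
    (ht : t.card = k) :
    mino k A s t = (A.submatrix (s.orderEmbOfFin hs) (t.orderEmbOfFin ht)).det := by
  rw [mino, dif_pos ⟨hs, ht⟩]

lemma subdet_eq (M : Matrix (Fin n) (Fin n) R) {s : Finset (Fin n)} (hs : s.card = k) :
    (M.submatrix (Subtype.val : {i : Fin n // i ∈ s} → Fin n)
      (Subtype.val : {i : Fin n // i ∈ s} → Fin n)).det
    = (M.submatrix (s.orderEmbOfFin hs) (s.orderEmbOfFin hs)).det := by
  rw [← Matrix.det_submatrix_equiv_self (s.orderIsoOfFin hs).toEquiv]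
  congr 1

lemma prod_emb (d : Fin n → R) {t : Finset (Fin n)} (ht : t.card = k) :
    (∏ i : Fin k, d (t.orderEmbOfFin ht i)) = ∏ j ∈ t, d j := by
  have himg : Finset.image (⇑(t.orderEmbOfFin ht)) Finset.univ = t := by
    ext j
    simp only [Finset.mem_image, Finset.mem_univ, true_and]
    constructor
    · rintro ⟨i, rfl⟩; exact Finset.orderEmbOfFin_mem t ht i
    · intro hj
      have : j ∈ Set.range ⇑(t.orderEmbOfFin ht) := by
        rw [Finset.range_orderEmbOfFin]; exact_mod_cast hj
      exact this
  conv_rhs => rw [← himg]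
  rw [Finset.prod_image (fun a _ b _ h => (t.orderEmbOfFin ht).injective h)]

theorem cbd (A B : Matrix (Fin n) (Fin n) R) (d : Fin n → R) {s : Finset (Fin n)}
    (hs : s.card = k) :
    ((A * diagonal d * B).submatrix (Subtype.val : {i : Fin n // i ∈ s} → Fin n)
      (Subtype.val : {i : Fin n // i ∈ s} → Fin n)).det
    = ∑ t ∈ Finset.powersetCard k (Finset.univ : Finset (Fin n)),
        (∏ j ∈ t, d j) * (mino k A s t * mino k B t s) := by
  rw [subdet_eq _ hs]
  have hsplit : (A * diagonal d * B).submatrix (s.orderEmbOfFin hs) (s.orderEmbOfFin hs)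
      = ((A * diagonal d).submatrix (s.orderEmbOfFin hs) id) * (B.submatrix id (s.orderEmbOfFin hs)) := by
    ext i j
    simp [Matrix.mul_apply]
  rw [hsplit, cauchy_binet]
  refine Finset.sum_congr rfl fun t ht => ?_
  have htc : t.card = k := Finset.mem_powersetCard_univ.mp ht
  rw [cmin, rmin, dif_pos htc, dif_pos htc, mino_eq _ hs htc, mino_eq _ htc hs]
  have h1 : ((A * diagonal d).submatrix (s.orderEmbOfFin hs) id).submatrix id (t.orderEmbOfFin htc)
      = Matrix.of fun i j => d (t.orderEmbOfFin htc j) *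
          (A.submatrix (s.orderEmbOfFin hs) (t.orderEmbOfFin htc)) i j := by
    ext i j
    simp [Matrix.mul_diagonal, mul_comm]
  have h2 : (B.submatrix id (s.orderEmbOfFin hs)).submatrix (t.orderEmbOfFin htc) id
      = B.submatrix (t.orderEmbOfFin htc) (s.orderEmbOfFin hs) := by
    ext i j; simp
  rw [h1, h2, Matrix.det_mul_row, prod_emb d htc, mul_assoc]

lemma submatrix_one_subtype {s : Finset (Fin n)} :
    ((1 : Matrix (Fin n) (Fin n) R).submatrix (Subtype.val : {i : Fin n // i ∈ s} → Fin n)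
      (Subtype.val : {i : Fin n // i ∈ s} → Fin n)) = 1 := by
  ext i j
  by_cases h : i = j
  · simp [h, Matrix.one_apply]
  · have : (i : Fin n) ≠ (j : Fin n) := fun hc => h (Subtype.ext hc)
    simp [Matrix.one_apply, h, this]

variable {U : Matrix (Fin n) (Fin n) ℂ}

theorem row_sum (hUr : U * star U = 1) {s : Finset (Fin n)} (hs : s.card = k) :
    ∑ t ∈ Finset.powersetCard k (Finset.univ : Finset (Fin n)),
      mino k U s t * mino k (star U) t s = 1 := by
  have h := cbd (k := k) U (star U) (fun _ => (1 : ℂ)) hs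
  rw [show Matrix.diagonal (fun _ => (1:ℂ)) = 1 from Matrix.diagonal_one, mul_one, hUr,
    submatrix_one_subtype, Matrix.det_one] at h
  refine Eq.trans (Finset.sum_congr rfl fun t _ => ?_) h.symm
  simp

theorem col_sum (hUl : star U * U = 1) {t : Finset (Fin n)} (ht : t.card = k) :
    ∑ s ∈ Finset.powersetCard k (Finset.univ : Finset (Fin n)),
      mino k U s t * mino k (star U) t s = 1 := by
  have h := cbd (k := k) (star U) U (fun _ => (1 : ℂ)) ht
  rw [show Matrix.diagonal (fun _ => (1:ℂ)) = 1 from Matrix.diagonal_one, mul_one, hUl,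
    submatrix_one_subtype, Matrix.det_one] at h
  refine Eq.trans (Finset.sum_congr rfl fun t _ => ?_) h.symm
  simp [mul_comm]

theorem single_sum (hUr : U * star U = 1) {s : Finset (Fin n)} (hs : s.card = k) (r : Fin n) :
    ∑ t ∈ Finset.powersetCard k (Finset.univ : Finset (Fin n)),
      (if r ∈ t then (1:ℂ) else 0) * (mino k U s t * mino k (star U) t s)
    = ∑ i ∈ s, U i r * star U r i := by
  have h := cbd (k := k) U (star U) (fun j => if j = r then (2 : ℂ) else 1) hs
  -- identify the left side of h
  have hM : U * Matrix.diagonal (fun j => if j = r then (2 : ℂ) else 1) * star U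
      = 1 + Matrix.of (fun x y => U x r * star U r y) := by
    have hd : Matrix.diagonal (fun j => if j = r then (2 : ℂ) else 1)
        = 1 + Matrix.diagonal (fun j => if j = r then (1 : ℂ) else 0) := by
      ext i j
      simp only [Matrix.diagonal_apply, Matrix.one_apply, Matrix.add_apply]
      split_ifs <;> ring
    rw [hd, mul_add, add_mul, mul_one, hUr]
    congr 1
    ext x y
    rw [Matrix.mul_apply]
    have hz : ∀ z, (U * Matrix.diagonal (fun j => if j = r then (1 : ℂ) else 0)) x z * star U z y
        = if z = r then U x r * star U r y else 0 := by
      intro z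
      rw [Matrix.mul_diagonal]
      by_cases hzr : z = r <;> simp [hzr]
    simp only [hz, Finset.sum_ite_eq', Finset.mem_univ, if_true, Matrix.of_apply]
  rw [hM] at h
  have hsub : ((1 + Matrix.of (fun x y => U x r * star U r y)).submatrix
      (Subtype.val : {i : Fin n // i ∈ s} → Fin n) (Subtype.val : {i : Fin n // i ∈ s} → Fin n))
      = 1 + Matrix.replicateCol Unit (fun i : {i : Fin n // i ∈ s} => U i r)
          * Matrix.replicateRow Unit (fun j : {i : Fin n // i ∈ s} => star U r j) := by
    ext i j
    have h1 : (Matrix.replicateCol Unit (fun i : {i : Fin n // i ∈ s} => U i r)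
          * Matrix.replicateRow Unit (fun j : {i : Fin n // i ∈ s} => star U r j)) i j
        = U i r * star U r j := by
      rw [Matrix.mul_apply, Fintype.sum_unique]
      simp
    simp only [Matrix.submatrix_apply, Matrix.add_apply, Matrix.of_apply, h1]
    congr 1
    by_cases hij : i = j
    · simp [hij, Matrix.one_apply]
    · have hne : (i : Fin n) ≠ (j : Fin n) := fun hc => hij (Subtype.ext hc)
      simp [Matrix.one_apply, hij, hne]
  rw [hsub, Matrix.det_one_add_replicateCol_mul_replicateRow] at h
  have hdot : (fun j : {i : Fin n // i ∈ s} => star U r j) ⬝ᵥ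
      (fun i : {i : Fin n // i ∈ s} => U i r) = ∑ i ∈ s, U i r * star U r i := by
    rw [dotProduct]
    rw [← Finset.sum_coe_sort s (fun i => U i r * star U r i)]
    exact Finset.sum_congr rfl fun i _ => mul_comm _ _
  rw [hdot] at h
  -- identify the right side of h
  have hprod : ∀ t ∈ Finset.powersetCard k (Finset.univ : Finset (Fin n)),
      (∏ j ∈ t, (if j = r then (2:ℂ) else 1)) * (mino k U s t * mino k (star U) t s)
      = mino k U s t * mino k (star U) t s
        + (if r ∈ t then (1:ℂ) else 0) * (mino k U s t * mino k (star U) t s) := by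
    intro t _
    rw [Finset.prod_ite_eq' t r (fun _ => (2:ℂ))]
    by_cases hr : r ∈ t <;> simp [hr] <;> ring
  rw [Finset.sum_congr rfl hprod, Finset.sum_add_distrib, row_sum hUr hs] at h
  exact (add_left_cancel h).symm

theorem weighted_sum (hUr : U * star U = 1) {s : Finset (Fin n)} (hs : s.card = k)
    (μ : Fin n → ℂ) :
    ∑ t ∈ Finset.powersetCard k (Finset.univ : Finset (Fin n)),
      (∑ j ∈ t, μ j) * (mino k U s t * mino k (star U) t s)
    = ∑ i ∈ s, (U * Matrix.diagonal μ * star U) i i := by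
  have step1 : ∀ t ∈ Finset.powersetCard k (Finset.univ : Finset (Fin n)),
      (∑ j ∈ t, μ j) * (mino k U s t * mino k (star U) t s)
      = ∑ j : Fin n, μ j * ((if j ∈ t then (1:ℂ) else 0) * (mino k U s t * mino k (star U) t s)) := by
    intro t _
    symm
    have hterm : ∀ j, μ j * ((if j ∈ t then (1:ℂ) else 0) * (mino k U s t * mino k (star U) t s))
        = (if j ∈ t then μ j * (mino k U s t * mino k (star U) t s) else 0) := fun j => by
      by_cases hj : j ∈ t <;> simp [hj]
    simp only [hterm]
    rw [Finset.sum_ite_mem, Finset.univ_inter, ← Finset.sum_mul]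
  rw [Finset.sum_congr rfl step1, Finset.sum_comm]
  have step2 : ∀ j : Fin n,
      (∑ t ∈ Finset.powersetCard k (Finset.univ : Finset (Fin n)),
        μ j * ((if j ∈ t then (1:ℂ) else 0) * (mino k U s t * mino k (star U) t s)))
      = μ j * ∑ i ∈ s, U i j * star U j i := by
    intro j
    rw [← Finset.mul_sum, single_sum hUr hs j]
  rw [Finset.sum_congr rfl (fun j _ => step2 j)]
  calc ∑ j : Fin n, μ j * ∑ i ∈ s, U i j * star U j i
      = ∑ j : Fin n, ∑ i ∈ s, μ j * (U i j * star U j i) := by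
        exact Finset.sum_congr rfl fun j _ => by rw [Finset.mul_sum]
    _ = ∑ i ∈ s, ∑ j : Fin n, μ j * (U i j * star U j i) := Finset.sum_comm
    _ = ∑ i ∈ s, (U * Matrix.diagonal μ * star U) i i := by
        refine Finset.sum_congr rfl fun i _ => ?_
        rw [Matrix.mul_apply]
        refine Finset.sum_congr rfl fun j _ => ?_
        rw [Matrix.mul_diagonal]
        ring


theorem sum_principal (hUr : U * star U = 1) (hUl : star U * U = 1) (d : Fin n → ℂ) :
    ∑ s ∈ Finset.powersetCard k (Finset.univ : Finset (Fin n)),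
      ((U * Matrix.diagonal d * star U).submatrix
        (Subtype.val : {i : Fin n // i ∈ s} → Fin n)
        (Subtype.val : {i : Fin n // i ∈ s} → Fin n)).det
    = ∑ t ∈ Finset.powersetCard k (Finset.univ : Finset (Fin n)), ∏ j ∈ t, d j := by
  rw [Finset.sum_congr rfl (fun s hs => cbd (k := k) U (star U) d
    (Finset.mem_powersetCard_univ.mp hs))]
  rw [Finset.sum_comm]
  refine Finset.sum_congr rfl fun t ht => ?_
  rw [← Finset.mul_sum, col_sum hUl (Finset.mem_powersetCard_univ.mp ht), mul_one]

theorem mino_star (U : Matrix (Fin n) (Fin n) ℂ) (s t : Finset (Fin n)) :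
    mino k (star U) t s = star (mino k U s t) := by
  by_cases h : s.card = k ∧ t.card = k
  · rw [mino, mino, dif_pos ⟨h.2, h.1⟩, dif_pos h]
    have : (star U).submatrix (⇑(t.orderEmbOfFin h.2)) (⇑(s.orderEmbOfFin h.1))
        = (U.submatrix (⇑(s.orderEmbOfFin h.1)) (⇑(t.orderEmbOfFin h.2)))ᴴ := by
      ext i j
      simp [Matrix.conjTranspose_apply, Matrix.star_apply]
    rw [this, Matrix.det_conjTranspose]
  · rw [mino, mino, dif_neg h, dif_neg (fun hc => h ⟨hc.2, hc.1⟩), star_zero]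

/-- real nonnegative "compound doubly stochastic" entries of a unitary. -/
noncomputable def cds (k : ℕ) (U : Matrix (Fin n) (Fin n) ℂ) (s t : Finset (Fin n)) : ℝ :=
  Complex.normSq (mino k U s t)

lemma cds_eq (U : Matrix (Fin n) (Fin n) ℂ) (s t : Finset (Fin n)) :
    mino k U s t * mino k (star U) t s = ((cds k U s t : ℝ) : ℂ) := by
  rw [mino_star, cds, ← Complex.mul_conj]
  rfl

lemma cds_nonneg (U : Matrix (Fin n) (Fin n) ℂ) (s t : Finset (Fin n)) :
    0 ≤ cds k U s t := Complex.normSq_nonneg _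

lemma cds_row_sum (hUr : U * star U = 1) {s : Finset (Fin n)} (hs : s.card = k) :
    ∑ t ∈ Finset.powersetCard k (Finset.univ : Finset (Fin n)), cds k U s t = 1 := by
  have h := row_sum (k := k) hUr hs
  rw [Finset.sum_congr rfl (fun t _ => cds_eq U s t)] at h
  exact_mod_cast h

lemma cds_col_sum (hUl : star U * U = 1) {t : Finset (Fin n)} (ht : t.card = k) :
    ∑ s ∈ Finset.powersetCard k (Finset.univ : Finset (Fin n)), cds k U s t = 1 := by
  have h := col_sum (k := k) hUl ht
  rw [Finset.sum_congr rfl (fun s _ => cds_eq U s t)] at h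
  exact_mod_cast h

lemma cds_weighted (hUr : U * star U = 1) {s : Finset (Fin n)} (hs : s.card = k)
    (μ : Fin n → ℝ) :
    ∑ t ∈ Finset.powersetCard k (Finset.univ : Finset (Fin n)),
      (∑ j ∈ t, μ j) * cds k U s t
    = ∑ i ∈ s, ∑ j, μ j * Complex.normSq (U i j) := by
  have h := weighted_sum (k := k) hUr hs (fun j => ((μ j : ℝ) : ℂ))
  have hL : ∀ t ∈ Finset.powersetCard k (Finset.univ : Finset (Fin n)),
      (∑ j ∈ t, ((μ j : ℝ) : ℂ)) * (mino k U s t * mino k (star U) t s)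
      = (((∑ j ∈ t, μ j) * cds k U s t : ℝ) : ℂ) := by
    intro t _
    rw [cds_eq]
    push_cast
    rfl
  rw [Finset.sum_congr rfl hL] at h
  have hR : ∀ i ∈ s, (U * Matrix.diagonal (fun j => ((μ j : ℝ) : ℂ)) * star U) i i
      = (((∑ j, μ j * Complex.normSq (U i j)) : ℝ) : ℂ) := by
    intro i _
    rw [Matrix.mul_apply]
    have hterm : ∀ j, (U * Matrix.diagonal (fun j => ((μ j : ℝ) : ℂ))) i j * star U j i
        = (((μ j * Complex.normSq (U i j)) : ℝ) : ℂ) := by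
      intro j
      rw [Matrix.mul_diagonal, Matrix.star_apply]
      rw [show U i j * ((μ j : ℝ) : ℂ) * star (U i j)
          = ((μ j : ℝ) : ℂ) * (U i j * star (U i j)) by ring]
      rw [show star (U i j) = (starRingEnd ℂ) (U i j) from rfl, Complex.mul_conj]
      push_cast
      rfl
    rw [Finset.sum_congr rfl (fun j _ => hterm j)]
    push_cast
    rfl
  rw [Finset.sum_congr rfl hR] at h
  rw [← Complex.ofReal_sum, ← Complex.ofReal_sum] at h
  exact_mod_cast h


/-! ### Analytic part -/

noncomputable def lse (k : ℕ) {n : ℕ} (lam : Fin n → ℝ) : ℝ :=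
  Real.log (∑ s ∈ Finset.powersetCard k (Finset.univ : Finset (Fin n)), Real.exp (∑ j ∈ s, lam j))

lemma pcard_nonempty (hkn : k ≤ n) :
    (Finset.powersetCard k (Finset.univ : Finset (Fin n))).Nonempty := by
  obtain ⟨t, hts, htc⟩ := Finset.exists_subset_card_eq
    (show k ≤ (Finset.univ : Finset (Fin n)).card by simpa using hkn)
  exact ⟨t, Finset.mem_powersetCard.mpr ⟨hts, htc⟩⟩

lemma Zpos (hkn : k ≤ n) (lam : Fin n → ℝ) :
    0 < ∑ s ∈ Finset.powersetCard k (Finset.univ : Finset (Fin n)),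
      Real.exp (∑ j ∈ s, lam j) :=
  Finset.sum_pos (fun _ _ => Real.exp_pos _) (pcard_nonempty hkn)

theorem trK_conj (hUr : U * star U = 1) (hUl : star U * U = 1) (d : Fin n → ℂ) :
    trK k (U * Matrix.diagonal d * star U)
      = ∑ t ∈ Finset.powersetCard k (Finset.univ : Finset (Fin n)), ∏ j ∈ t, d j := by
  rw [trK]
  exact sum_principal hUr hUl d

/-- Gibbs weights. -/
noncomputable def gw (k : ℕ) {n : ℕ} (lam : Fin n → ℝ) (i : Fin n) : ℝ :=
  ∑ s ∈ Finset.powersetCard k (Finset.univ : Finset (Fin n)),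
    (if i ∈ s then Real.exp (∑ j ∈ s, lam j)
        / (∑ u ∈ Finset.powersetCard k (Finset.univ : Finset (Fin n)),
            Real.exp (∑ j ∈ u, lam j)) else 0)

lemma gw_swap (k : ℕ) {n : ℕ} (lam : Fin n → ℝ) (v : Fin n → ℝ) :
    ∑ s ∈ Finset.powersetCard k (Finset.univ : Finset (Fin n)),
      (Real.exp (∑ j ∈ s, lam j)
        / (∑ u ∈ Finset.powersetCard k (Finset.univ : Finset (Fin n)),
            Real.exp (∑ j ∈ u, lam j))) * (∑ i ∈ s, v i)
    = ∑ i, gw k lam i * v i := by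
  have step : ∀ s ∈ Finset.powersetCard k (Finset.univ : Finset (Fin n)),
      (Real.exp (∑ j ∈ s, lam j)
        / (∑ u ∈ Finset.powersetCard k (Finset.univ : Finset (Fin n)),
            Real.exp (∑ j ∈ u, lam j))) * (∑ i ∈ s, v i)
      = ∑ i : Fin n, (if i ∈ s then (Real.exp (∑ j ∈ s, lam j)
        / (∑ u ∈ Finset.powersetCard k (Finset.univ : Finset (Fin n)),
            Real.exp (∑ j ∈ u, lam j))) * v i else 0) := by
    intro s _
    rw [Finset.sum_ite_mem, Finset.univ_inter, Finset.mul_sum]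
  rw [Finset.sum_congr rfl step, Finset.sum_comm]
  refine Finset.sum_congr rfl fun i _ => ?_
  rw [gw, Finset.sum_mul]
  refine Finset.sum_congr rfl fun s _ => ?_
  by_cases hi : i ∈ s <;> simp [hi]

/-- The Gibbs state matrix used as the (sub)gradient direction. -/
noncomputable def gibbs (k : ℕ) {n : ℕ} (P : Matrix (Fin n) (Fin n) ℂ)
    (hP : P.IsHermitian) : Matrix (Fin n) (Fin n) ℂ :=
  (hP.eigenvectorUnitary : Matrix (Fin n) (Fin n) ℂ)
    * Matrix.diagonal (fun i => ((gw k hP.eigenvalues i : ℝ) : ℂ))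
    * star (hP.eigenvectorUnitary : Matrix (Fin n) (Fin n) ℂ)

lemma trace_gibbs (k : ℕ) {n : ℕ} {P : Matrix (Fin n) (Fin n) ℂ} (hP : P.IsHermitian)
    (X : Matrix (Fin n) (Fin n) ℂ) :
    Matrix.trace (gibbs k P hP * X)
    = ∑ i, ((star (hP.eigenvectorUnitary : Matrix (Fin n) (Fin n) ℂ) * X
        * (hP.eigenvectorUnitary : Matrix (Fin n) (Fin n) ℂ)) i i)
        * ((gw k hP.eigenvalues i : ℝ) : ℂ) := by
  set U : Matrix (Fin n) (Fin n) ℂ := (hP.eigenvectorUnitary : Matrix (Fin n) (Fin n) ℂ)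
  set D : Matrix (Fin n) (Fin n) ℂ :=
    Matrix.diagonal (fun i => ((gw k hP.eigenvalues i : ℝ) : ℂ))
  have h1 : gibbs k P hP * X = (U * D) * (star U * X) := by
    rw [gibbs, Matrix.mul_assoc]
  rw [h1, Matrix.trace_mul_comm, ← Matrix.mul_assoc]
  simp only [Matrix.trace, Matrix.diag]
  exact Finset.sum_congr rfl fun i _ => Matrix.mul_diagonal _ _ _ _

theorem subgrad (hkn : k ≤ n) {P M : Matrix (Fin n) (Fin n) ℂ}
    (hP : P.IsHermitian) (hM : M.IsHermitian) :
    lse k hP.eigenvalues + (Matrix.trace (gibbs k P hP * (M - P))).re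
      ≤ lse k hM.eigenvalues := by
  classical
  set lam := hP.eigenvalues with hlam
  set mu := hM.eigenvalues with hmu
  set U : Matrix (Fin n) (Fin n) ℂ := (hP.eigenvectorUnitary : Matrix (Fin n) (Fin n) ℂ) with hU
  set V : Matrix (Fin n) (Fin n) ℂ := (hM.eigenvectorUnitary : Matrix (Fin n) (Fin n) ℂ) with hV
  have hUr : U * star U = 1 := Matrix.mem_unitaryGroup_iff.mp hP.eigenvectorUnitary.2
  have hUl : star U * U = 1 := Matrix.mem_unitaryGroup_iff'.mp hP.eigenvectorUnitary.2
  have hVr : V * star V = 1 := Matrix.mem_unitaryGroup_iff.mp hM.eigenvectorUnitary.2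
  have hVl : star V * V = 1 := Matrix.mem_unitaryGroup_iff'.mp hM.eigenvectorUnitary.2
  set W : Matrix (Fin n) (Fin n) ℂ := star U * V with hW
  have hWs : star W = star V * U := by rw [hW, Matrix.star_mul, star_star]
  have hWr : W * star W = 1 := by
    rw [hWs, hW, Matrix.mul_assoc, ← Matrix.mul_assoc V (star V) U, hVr, one_mul, hUl]
  have hWl : star W * W = 1 := by
    rw [hWs, hW, Matrix.mul_assoc, ← Matrix.mul_assoc U (star U) V, hUr, one_mul, hVl]
  set r : Fin n → ℝ := fun i => ∑ j, mu j * Complex.normSq (W i j) with hr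
  have hUMU : star U * M * U = W * Matrix.diagonal (fun j => ((mu j : ℝ) : ℂ)) * star W := by
    conv_lhs => rw [hM.spectral_theorem, Unitary.conjStarAlgAut_apply]
    rw [hWs, hW]
    simp only [Matrix.mul_assoc]
    rfl
  have hUPU : star U * P * U = Matrix.diagonal (fun i => ((lam i : ℝ) : ℂ)) := by
    conv_lhs => rw [hP.spectral_theorem, Unitary.conjStarAlgAut_apply]
    simp only [Matrix.mul_assoc]
    rw [hUl, Matrix.mul_one, ← Matrix.mul_assoc, hUl, one_mul]
    rfl
  have hdiagM : ∀ i, (star U * M * U) i i = ((r i : ℝ) : ℂ) := by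
    intro i
    rw [hUMU, Matrix.mul_apply]
    have hterm : ∀ j, (W * Matrix.diagonal (fun j => ((mu j : ℝ) : ℂ))) i j * star W j i
        = ((mu j * Complex.normSq (W i j) : ℝ) : ℂ) := by
      intro j
      rw [Matrix.mul_diagonal, Matrix.star_apply]
      rw [show W i j * ((mu j : ℝ) : ℂ) * star (W i j)
          = ((mu j : ℝ) : ℂ) * (W i j * star (W i j)) by ring]
      rw [show star (W i j) = (starRingEnd ℂ) (W i j) from rfl, Complex.mul_conj]
      push_cast
      rfl
    rw [Finset.sum_congr rfl (fun j _ => hterm j), hr]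
    push_cast
    rfl
  -- scalar data
  set Zp : ℝ := ∑ s ∈ Finset.powersetCard k (Finset.univ : Finset (Fin n)),
      Real.exp (∑ j ∈ s, lam j) with hZpdef
  have hZp : 0 < Zp := Zpos hkn lam
  set w : Finset (Fin n) → ℝ := fun s => Real.exp (∑ j ∈ s, lam j) / Zp with hwdef
  have hw0 : ∀ s, 0 ≤ w s := fun s => div_nonneg (Real.exp_pos _).le hZp.le
  have hw1 : ∑ s ∈ Finset.powersetCard k (Finset.univ : Finset (Fin n)), w s = 1 := by
    rw [hwdef, ← Finset.sum_div, ← hZpdef, div_self hZp.ne']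
  set q : Finset (Fin n) → ℝ := fun s => ∑ i ∈ s, r i with hqdef
  have hq : ∀ s ∈ Finset.powersetCard k (Finset.univ : Finset (Fin n)),
      q s = ∑ t ∈ Finset.powersetCard k (Finset.univ : Finset (Fin n)),
        cds k W s t • (∑ j ∈ t, mu j) := by
    intro s hs
    have h := cds_weighted hWr (Finset.mem_powersetCard_univ.mp hs) mu
    calc q s = ∑ i ∈ s, ∑ j, mu j * Complex.normSq (W i j) := rfl
      _ = ∑ t ∈ Finset.powersetCard k (Finset.univ : Finset (Fin n)),
            (∑ j ∈ t, mu j) * cds k W s t := h.symm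
      _ = ∑ t ∈ Finset.powersetCard k (Finset.univ : Finset (Fin n)),
            cds k W s t • (∑ j ∈ t, mu j) :=
          Finset.sum_congr rfl fun t _ => by rw [smul_eq_mul, mul_comm]
  have hA1 : (∑ s ∈ Finset.powersetCard k (Finset.univ : Finset (Fin n)), Real.exp (q s))
      ≤ ∑ t ∈ Finset.powersetCard k (Finset.univ : Finset (Fin n)),
          Real.exp (∑ j ∈ t, mu j) := by
    have per : ∀ s ∈ Finset.powersetCard k (Finset.univ : Finset (Fin n)),
        Real.exp (q s) ≤ ∑ t ∈ Finset.powersetCard k (Finset.univ : Finset (Fin n)),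
          cds k W s t * Real.exp (∑ j ∈ t, mu j) := by
      intro s hs
      have jen := convexOn_exp.map_sum_le (w := cds k W s)
        (p := fun t => ∑ j ∈ t, mu j)
        (t := Finset.powersetCard k (Finset.univ : Finset (Fin n)))
        (fun t _ => cds_nonneg W s t)
        (cds_row_sum hWr (Finset.mem_powersetCard_univ.mp hs))
        (fun _ _ => Set.mem_univ _)
      rw [← hq s hs] at jen
      simpa [smul_eq_mul] using jen
    calc (∑ s ∈ Finset.powersetCard k (Finset.univ : Finset (Fin n)), Real.exp (q s))
        ≤ ∑ s ∈ Finset.powersetCard k (Finset.univ : Finset (Fin n)),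
            ∑ t ∈ Finset.powersetCard k (Finset.univ : Finset (Fin n)),
              cds k W s t * Real.exp (∑ j ∈ t, mu j) := Finset.sum_le_sum per
      _ = ∑ t ∈ Finset.powersetCard k (Finset.univ : Finset (Fin n)),
            (∑ s ∈ Finset.powersetCard k (Finset.univ : Finset (Fin n)), cds k W s t)
              * Real.exp (∑ j ∈ t, mu j) := by
          rw [Finset.sum_comm]
          exact Finset.sum_congr rfl fun t _ => by rw [Finset.sum_mul]
      _ = ∑ t ∈ Finset.powersetCard k (Finset.univ : Finset (Fin n)),
            Real.exp (∑ j ∈ t, mu j) := by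
          refine Finset.sum_congr rfl fun t ht => ?_
          rw [cds_col_sum hWl (Finset.mem_powersetCard_univ.mp ht), one_mul]
  have hqpos : 0 < ∑ s ∈ Finset.powersetCard k (Finset.univ : Finset (Fin n)),
      Real.exp (q s) :=
    Finset.sum_pos (fun _ _ => Real.exp_pos _) (pcard_nonempty hkn)
  have hA2 : ∑ s ∈ Finset.powersetCard k (Finset.univ : Finset (Fin n)),
      w s * (q s - (∑ j ∈ s, lam j))
      ≤ Real.log (∑ s ∈ Finset.powersetCard k (Finset.univ : Finset (Fin n)),
          Real.exp (q s)) - Real.log Zp := by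
    have jen := convexOn_exp.map_sum_le (w := w)
      (p := fun s => q s - (∑ j ∈ s, lam j))
      (t := Finset.powersetCard k (Finset.univ : Finset (Fin n)))
      (fun s _ => hw0 s) hw1 (fun _ _ => Set.mem_univ _)
    have hrhs : ∑ s ∈ Finset.powersetCard k (Finset.univ : Finset (Fin n)),
        w s • Real.exp (q s - (∑ j ∈ s, lam j))
        = (∑ s ∈ Finset.powersetCard k (Finset.univ : Finset (Fin n)),
            Real.exp (q s)) / Zp := by
      rw [Finset.sum_div]
      refine Finset.sum_congr rfl fun s _ => ?_
      rw [smul_eq_mul, hwdef, Real.exp_sub]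
      field_simp
    rw [hrhs] at jen
    have h2 : ∑ s ∈ Finset.powersetCard k (Finset.univ : Finset (Fin n)),
        w s * (q s - (∑ j ∈ s, lam j))
        = Real.log (Real.exp (∑ s ∈ Finset.powersetCard k (Finset.univ : Finset (Fin n)),
            w s • (q s - (∑ j ∈ s, lam j)))) := by
      rw [Real.log_exp]
      exact Finset.sum_congr rfl fun s _ => by rw [smul_eq_mul]
    rw [h2, ← Real.log_div hqpos.ne' hZp.ne']
    exact Real.log_le_log (Real.exp_pos _) jen
  -- step A3
  have swapgen : ∀ v : Fin n → ℝ,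
      ∑ s ∈ Finset.powersetCard k (Finset.univ : Finset (Fin n)), w s * (∑ i ∈ s, v i)
      = ∑ i, gw k lam i * v i := fun v => gw_swap k lam v
  have htrM : (Matrix.trace (gibbs k P hP * M)).re = ∑ i, gw k lam i * r i := by
    rw [trace_gibbs]
    have hcong : ∀ i ∈ (Finset.univ : Finset (Fin n)),
        ((star U * M * U) i i) * ((gw k lam i : ℝ) : ℂ)
        = ((gw k lam i * r i : ℝ) : ℂ) := by
      intro i _
      rw [hdiagM i]
      push_cast
      ring
    rw [Finset.sum_congr rfl hcong, ← Complex.ofReal_sum]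
    exact Complex.ofReal_re _
  have htrP : (Matrix.trace (gibbs k P hP * P)).re = ∑ i, gw k lam i * lam i := by
    rw [trace_gibbs]
    have hcong : ∀ i ∈ (Finset.univ : Finset (Fin n)),
        ((star U * P * U) i i) * ((gw k lam i : ℝ) : ℂ)
        = ((gw k lam i * lam i : ℝ) : ℂ) := by
      intro i _
      rw [hUPU, Matrix.diagonal_apply_eq]
      push_cast
      ring
    rw [Finset.sum_congr rfl hcong, ← Complex.ofReal_sum]
    exact Complex.ofReal_re _
  have hA3 : ∑ s ∈ Finset.powersetCard k (Finset.univ : Finset (Fin n)),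
      w s * (q s - (∑ j ∈ s, lam j))
      = (Matrix.trace (gibbs k P hP * (M - P))).re := by
    have expand : ∀ s, w s * (q s - (∑ j ∈ s, lam j))
        = w s * q s - w s * (∑ j ∈ s, lam j) := fun s => by ring
    rw [Finset.sum_congr rfl (fun s _ => expand s), Finset.sum_sub_distrib]
    rw [swapgen r, swapgen lam]
    rw [Matrix.mul_sub, Matrix.trace_sub, Complex.sub_re, htrM, htrP]
  -- combine
  have hlse : lse k mu = Real.log (∑ t ∈ Finset.powersetCard k
      (Finset.univ : Finset (Fin n)), Real.exp (∑ j ∈ t, mu j)) := rfl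
  rw [hlse, show lse k lam = Real.log Zp from rfl, ← hA3]
  calc Real.log Zp + ∑ s ∈ Finset.powersetCard k (Finset.univ : Finset (Fin n)),
        w s * (q s - (∑ j ∈ s, lam j))
      ≤ Real.log Zp + (Real.log (∑ s ∈ Finset.powersetCard k
          (Finset.univ : Finset (Fin n)), Real.exp (q s)) - Real.log Zp) := by
        linarith [hA2]
    _ = Real.log (∑ s ∈ Finset.powersetCard k (Finset.univ : Finset (Fin n)),
          Real.exp (q s)) := by ring
    _ ≤ Real.log (∑ t ∈ Finset.powersetCard k (Finset.univ : Finset (Fin n)),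
          Real.exp (∑ j ∈ t, mu j)) := Real.log_le_log hqpos hA1


theorem trK_mexp {A : Matrix (Fin n) (Fin n) ℂ} (hA : A.IsHermitian) :
    trK k (mexp A) = ((∑ s ∈ Finset.powersetCard k (Finset.univ : Finset (Fin n)),
      Real.exp (∑ j ∈ s, hA.eigenvalues j) : ℝ) : ℂ) := by
  have hUr : (hA.eigenvectorUnitary : Matrix (Fin n) (Fin n) ℂ)
      * star (hA.eigenvectorUnitary : Matrix (Fin n) (Fin n) ℂ) = 1 :=
    Matrix.mem_unitaryGroup_iff.mp hA.eigenvectorUnitary.2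
  have hUl : star (hA.eigenvectorUnitary : Matrix (Fin n) (Fin n) ℂ)
      * (hA.eigenvectorUnitary : Matrix (Fin n) (Fin n) ℂ) = 1 :=
    Matrix.mem_unitaryGroup_iff'.mp hA.eigenvectorUnitary.2
  have hexp : mexp A = (hA.eigenvectorUnitary : Matrix (Fin n) (Fin n) ℂ)
      * Matrix.diagonal (fun i => ((Real.exp (hA.eigenvalues i) : ℝ) : ℂ))
      * star (hA.eigenvectorUnitary : Matrix (Fin n) (Fin n) ℂ) := by
    rw [mexp, hA.cfc_eq]
    rfl
  rw [hexp, trK_conj hUr hUl, Complex.ofReal_sum]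
  refine Finset.sum_congr rfl fun t _ => ?_
  rw [Real.exp_sum, Complex.ofReal_prod]

lemma herm_smul {A : Matrix (Fin n) (Fin n) ℂ} (hA : A.IsHermitian) (r : ℝ) :
    (r • A).IsHermitian := by
  rw [Matrix.IsHermitian, Matrix.conjTranspose_smul, star_trivial, hA.eq]


end KPB

/-- k-trace Peierls–Bogoliubov inequality. -/
theorem ktrace_peierls_bogoliubov {n k : ℕ} (hk : 1 ≤ k) (hkn : k ≤ n) :
    ConvexOn ℝ {A : Matrix (Fin n) (Fin n) ℂ | A.IsHermitian}
      (fun A => Real.log (trK k (mexp A)).re) := by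
  constructor
  · intro X hX Y hY a b _ _ _
    exact ((KPB.herm_smul hX a).add (KPB.herm_smul hY b))
  · intro X hX Y hY a b ha hb hab
    have hX : X.IsHermitian := hX
    have hY : Y.IsHermitian := hY
    have hP : (a • X + b • Y).IsHermitian := (KPB.herm_smul hX a).add (KPB.herm_smul hY b)
    have hval : ∀ (A : Matrix (Fin n) (Fin n) ℂ) (hA : A.IsHermitian),
        Real.log (trK k (mexp A)).re = KPB.lse k hA.eigenvalues := by
      intro A hA
      rw [KPB.trK_mexp hA, Complex.ofReal_re]
      rfl
    show Real.log (trK k (mexp (a • X + b • Y))).re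
      ≤ a • Real.log (trK k (mexp X)).re + b • Real.log (trK k (mexp Y)).re
    rw [hval _ hP, hval _ hX, hval _ hY, smul_eq_mul, smul_eq_mul]
    have h1 := KPB.subgrad hkn hP hX
    have h2 := KPB.subgrad hkn hP hY
    set G := KPB.gibbs k (a • X + b • Y) hP with hG
    set tX := (Matrix.trace (G * (X - (a • X + b • Y)))).re with htX
    set tY := (Matrix.trace (G * (Y - (a • X + b • Y)))).re with htY
    have hcomb : a • (X - (a • X + b • Y)) + b • (Y - (a • X + b • Y)) = 0 := by
      have e : a • (X - (a • X + b • Y)) + b • (Y - (a • X + b • Y))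
          = (a • X + b • Y) - (a + b) • (a • X + b • Y) := by module
      rw [e, hab, one_smul, sub_self]
    have hzero : a * tX + b * tY = 0 := by
      rw [htX, htY]
      have expand : a * (Matrix.trace (G * (X - (a • X + b • Y)))).re
          + b * (Matrix.trace (G * (Y - (a • X + b • Y)))).re
          = (Matrix.trace (G * (a • (X - (a • X + b • Y)) + b • (Y - (a • X + b • Y))))).re := by
        rw [Matrix.mul_add, Matrix.mul_smul, Matrix.mul_smul, Matrix.trace_add,
          Matrix.trace_smul, Matrix.trace_smul, Complex.add_re]
        congr 1 <;> simp [Complex.real_smul]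
      rw [expand, hcomb, Matrix.mul_zero, Matrix.trace_zero, Complex.zero_re]
    have hsum := add_le_add (mul_le_mul_of_nonneg_left h1 ha) (mul_le_mul_of_nonneg_left h2 hb)
    have e1 : a * (KPB.lse k hP.eigenvalues + tX) + b * (KPB.lse k hP.eigenvalues + tY)
        = KPB.lse k hP.eigenvalues := by
      have : a * (KPB.lse k hP.eigenvalues + tX) + b * (KPB.lse k hP.eigenvalues + tY)
          = (a + b) * KPB.lse k hP.eigenvalues + (a * tX + b * tY) := by ring
      rw [this, hab, hzero, one_mul, add_zero]
    linarith [hsum, e1]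
end
end

section
/- For any Hermitian positive semidefinite n×n matrix A, tr_k[A] ≤ tr_k[diag(A)], where diag(A) is the diagonal part of A. Equivalently, (tr_k[A])^{1/k} ≤ (tr_k[diag(A)])^{1/k}. -/
noncomputable section
open scoped Matrix ComplexOrder

section Aux
open Matrix Finset
set_option linter.unusedSectionVars false
set_option maxHeartbeats 1000000

variable {m : Type*} [Fintype m] [DecidableEq m]


lemma diag_entry_eq_re {A : Matrix m m ℂ} (hA : A.PosSemidef) (i : m) :
    A i i = ((A i i).re : ℂ) := by
  have h := congrFun (congrFun hA.1 i) i
  simp only [conjTranspose_apply] at h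
  exact ((Complex.conj_eq_iff_re).mp h).symm

lemma diag_entry_nonneg {A : Matrix m m ℂ} (hA : A.PosSemidef) (i : m) :
    0 ≤ (A i i).re := by
  have h : (0:ℂ) ≤ A i i := by
    exact hA.diag_nonneg
  rw [diag_entry_eq_re hA i] at h
  exact Complex.zero_le_real.mp h

lemma trace_eq_sum_eigen {A : Matrix m m ℂ} (hA : A.IsHermitian) :
    A.trace = ∑ i, (hA.eigenvalues i : ℂ) := by
  exact hA.trace_eq_sum_eigenvalues

lemma det_eq_re {A : Matrix m m ℂ} (hA : A.PosSemidef) :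
    A.det = (A.det.re : ℂ) ∧ 0 ≤ A.det.re := by
  have h2 : A.det = ((∏ i, hA.1.eigenvalues i : ℝ) : ℂ) := by
    rw [hA.1.det_eq_prod_eigenvalues]; push_cast; rfl
  have h3 : 0 ≤ ∏ i, hA.1.eigenvalues i :=
    Finset.prod_nonneg (fun i _ => hA.eigenvalues_nonneg i)
  have h4 : A.det.re = ∏ i, hA.1.eigenvalues i := by
    rw [h2]; exact Complex.ofReal_re _
  exact ⟨by rw [h4, h2], by rw [h4]; exact h3⟩

lemma amgm_prod_le_one (μ : m → ℝ) (h0 : ∀ i, 0 ≤ μ i)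
    (hs : ∑ i, μ i = (Fintype.card m : ℝ)) : ∏ i, μ i ≤ 1 := by
  rcases isEmpty_or_nonempty m with hm | hm
  · simp
  have hcard : (0:ℝ) < (Fintype.card m : ℝ) := by positivity
  set c : ℝ := (Fintype.card m : ℝ)⁻¹ with hcdef
  have hcpos : 0 < c := by positivity
  have key := Real.geom_mean_le_arith_mean_weighted Finset.univ (fun _ => c) μ
    (fun i _ => hcpos.le) (by simp [hcdef, Finset.card_univ, mul_comm,
      inv_mul_cancel₀ hcard.ne']) (fun i _ => h0 i)
  have hprod : ∏ i, μ i ^ c = (∏ i, μ i) ^ c := by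
    rw [← Real.finset_prod_rpow _ _ (fun i _ => h0 i)]
  have hsum : ∑ i, c * μ i = 1 := by
    rw [← Finset.mul_sum, hs, hcdef, inv_mul_cancel₀ hcard.ne']
  rw [hprod, hsum] at key
  have hP : 0 ≤ ∏ i, μ i := Finset.prod_nonneg (fun i _ => h0 i)
  calc ∏ i, μ i = ((∏ i, μ i) ^ c) ^ (Fintype.card m : ℝ) := by
        rw [← Real.rpow_mul hP, hcdef, inv_mul_cancel₀ hcard.ne', Real.rpow_one]
    _ ≤ 1 ^ (Fintype.card m : ℝ) := Real.rpow_le_rpow (Real.rpow_nonneg hP c) key hcard.le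
    _ = 1 := Real.one_rpow _

lemma hadamard {A : Matrix m m ℂ} (hA : A.PosSemidef) :
    A.det.re ≤ ∏ i, (A i i).re := by
  by_cases hz : ∀ i, A i i ≠ 0
  · have hd : ∀ i, 0 < (A i i).re := by
      intro i
      rcases (diag_entry_nonneg hA i).lt_or_eq with h | h
      · exact h
      · exact absurd (by rw [diag_entry_eq_re hA i, ← h]; norm_num : A i i = 0) (hz i)
    set c : m → ℝ := fun i => Real.sqrt ((A i i).re)⁻¹ with hcdef
    have hc : ∀ i, 0 < c i := fun i => Real.sqrt_pos.mpr (inv_pos.mpr (hd i))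
    have hc2 : ∀ i, c i ^ 2 = ((A i i).re)⁻¹ := fun i =>
      Real.sq_sqrt (inv_nonneg.mpr (hd i).le)
    set D : Matrix m m ℂ := diagonal (fun i => (c i : ℂ)) with hDdef
    have hDH : Dᴴ = D := by
      rw [hDdef]
      ext i j
      rcases eq_or_ne i j with h | h
      · subst h; simp
      · simp [conjTranspose_apply, diagonal_apply_ne, h, Ne.symm h]
    set B : Matrix m m ℂ := Dᴴ * A * D with hBdef
    have hBpsd : B.PosSemidef := hA.conjTranspose_mul_mul_same D
    have hBentry : ∀ i, B i i = 1 := by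
      intro i
      have e1 : B i i = (c i : ℂ) * A i i * (c i : ℂ) := by
        rw [hBdef, hDH, hDdef, Matrix.mul_diagonal, Matrix.diagonal_mul]
      rw [e1, diag_entry_eq_re hA i]
      have e2 : (c i : ℂ) * ((A i i).re : ℂ) * (c i : ℂ)
          = ((c i ^ 2 * (A i i).re : ℝ) : ℂ) := by push_cast; ring
      rw [e2, hc2 i, inv_mul_cancel₀ (hd i).ne']
      norm_num
    set μ : m → ℝ := hBpsd.1.eigenvalues with hμdef
    have hμ0 : ∀ i, 0 ≤ μ i := fun i => hBpsd.eigenvalues_nonneg i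
    have hμsum : ∑ i, μ i = (Fintype.card m : ℝ) := by
      have h1 := trace_eq_sum_eigen hBpsd.1
      have h2 : B.trace = (Fintype.card m : ℂ) := by
        rw [Matrix.trace]
        unfold Matrix.diag
        rw [Finset.sum_congr rfl (fun i _ => hBentry i)]
        simp
      rw [h2] at h1
      have h3 := congrArg Complex.re h1
      simpa using h3.symm
    have hμprod : (∏ i, μ i) ≤ 1 := amgm_prod_le_one μ hμ0 hμsum
    have hdetB : B.det = ((∏ i, μ i : ℝ) : ℂ) := by
      rw [hBpsd.1.det_eq_prod_eigenvalues]; push_cast; rfl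
    have hdetD : D.det = ((∏ i, c i : ℝ) : ℂ) := by
      rw [hDdef, det_diagonal]; push_cast; rfl
    obtain ⟨hAdet, hAdetnn⟩ := det_eq_re hA
    have hdetB2 : ((∏ i, μ i : ℝ) : ℂ) = (((∏ i, c i)^2 * A.det.re : ℝ) : ℂ) := by
      rw [← hdetB, hBdef, det_mul, det_mul, hDH, hdetD]
      conv_lhs => rw [hAdet]
      push_cast; ring
    have hkey : (∏ i, c i)^2 * A.det.re ≤ 1 := by
      have h4 := congrArg Complex.re hdetB2
      simp only [Complex.ofReal_re] at h4
      rw [h4] at hμprod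
      exact hμprod
    have hcprod : (∏ i, c i)^2 = (∏ i, (A i i).re)⁻¹ := by
      rw [← Finset.prod_pow, ← Finset.prod_inv_distrib]
      exact Finset.prod_congr rfl (fun i _ => hc2 i)
    rw [hcprod] at hkey
    have hdprod : 0 < ∏ i, (A i i).re := Finset.prod_pos (fun i _ => hd i)
    calc A.det.re = (∏ i, (A i i).re) * ((∏ i, (A i i).re)⁻¹ * A.det.re) := by
          field_simp
      _ ≤ (∏ i, (A i i).re) * 1 := mul_le_mul_of_nonneg_left hkey hdprod.le
      _ = ∏ i, (A i i).re := mul_one _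
  · push_neg at hz
    obtain ⟨i, hi⟩ := hz
    obtain ⟨B, hB⟩ : ∃ B : Matrix m m ℂ, A = Bᴴ * B := by
      open scoped MatrixOrder in
      exact CStarAlgebra.nonneg_iff_eq_star_mul_self.mp hA.nonneg
    have hcol : ∀ k, B k i = 0 := by
      have h0 : ∑ k, Complex.normSq (B k i) = 0 := by
        have h1 : A i i = ∑ k, (Complex.normSq (B k i) : ℂ) := by
          rw [hB, Matrix.mul_apply]
          refine Finset.sum_congr rfl (fun k _ => ?_)
          simp [Matrix.conjTranspose_apply, Complex.normSq_eq_conj_mul_self]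
        rw [hi] at h1
        have h2 := congrArg Complex.re h1.symm
        simpa using h2
      intro k
      exact Complex.normSq_eq_zero.mp ((Finset.sum_eq_zero_iff_of_nonneg
        (fun k _ => Complex.normSq_nonneg (B k i))).mp h0 k (Finset.mem_univ k))
    have hdet : A.det = 0 := by
      apply Matrix.det_eq_zero_of_column_eq_zero i
      intro j
      rw [hB, Matrix.mul_apply]
      simp [Matrix.conjTranspose_apply, hcol]
    rw [hdet, Finset.prod_eq_zero (Finset.mem_univ i) (by rw [hi]; norm_num)]
    simp

end Aux

set_option linter.unusedVariables false

/-- the k-trace of a PSD matrix is dominated by the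
k-trace of its diagonal part. -/
theorem ktrace_le_ktrace_diag {n k : ℕ} (hk : 1 ≤ k) (hkn : k ≤ n)
    (A : Matrix (Fin n) (Fin n) ℂ) (hA : A.PosSemidef) :
    (trK k A).re ≤ (trK k (Matrix.diagonal fun i => A i i)).re := by
  unfold trK
  rw [Complex.re_sum, Complex.re_sum]
  apply Finset.sum_le_sum
  intro s _
  have hsub : (A.submatrix (Subtype.val : {i : Fin n // i ∈ s} → Fin n) Subtype.val).PosSemidef :=
    hA.submatrix _
  have h1 := hadamard hsub
  have h2 : ((Matrix.diagonal fun i => A i i).submatrix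
      (Subtype.val : {i : Fin n // i ∈ s} → Fin n) Subtype.val)
      = Matrix.diagonal (fun j : {i : Fin n // i ∈ s} => A j.val j.val) :=
    Matrix.submatrix_diagonal _ _ Subtype.val_injective
  rw [h2, Matrix.det_diagonal]
  have h3 : (∏ j : {i : Fin n // i ∈ s}, A j.val j.val)
      = ((∏ j : {i : Fin n // i ∈ s}, (A j.val j.val).re : ℝ) : ℂ) := by
    push_cast
    exact Finset.prod_congr rfl (fun j _ => diag_entry_eq_re hA j.val)
  rw [h3, Complex.ofReal_re]
  exact h1
end
end

section
/- If f : ℝ → [0,∞) is concave as a scalar function, then A ↦ (tr_k[f(A)])^{1/k} is concave on the cone of n×n Hermitian positive semidefinite matrices. -/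
noncomputable section
open scoped Matrix ComplexOrder

/-! ### Auxiliary scalar theory: elementary symmetric functions and the
Marcus–Lopes inequality. -/

set_option linter.unusedSectionVars false
set_option maxHeartbeats 1000000

namespace KT
open Finset Filter Topology

variable {ι : Type*} [DecidableEq ι]

/-- elementary symmetric polynomial of the values of `x` on `F`. -/
def esym (F : Finset ι) (k : ℕ) (x : ι → ℝ) : ℝ :=
  ∑ s ∈ F.powersetCard k, ∏ i ∈ s, x i

lemma esym_zero (F : Finset ι) (x : ι → ℝ) : esym F 0 x = 1 := by
  simp [esym]

lemma esym_erase {F : Finset ι} {i : ι} (hi : i ∈ F) (k : ℕ) (x : ι → ℝ) :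
    esym F (k+1) x = x i * esym (F.erase i) k x + esym (F.erase i) (k+1) x := by
  unfold esym
  conv_lhs => rw [← Finset.insert_erase hi]
  rw [Finset.powersetCard_succ_insert (Finset.notMem_erase i F)]
  rw [Finset.sum_union]
  · rw [add_comm, Finset.sum_image ?inj]
    case inj =>
      intro s hs t ht hst
      simp only [Finset.mem_coe, Finset.mem_powersetCard] at hs ht
      have hi1 : i ∉ s := fun h => (Finset.notMem_erase i F) (hs.1 h)
      have hi2 : i ∉ t := fun h => (Finset.notMem_erase i F) (ht.1 h)
      rw [← Finset.erase_insert hi1, hst, Finset.erase_insert hi2]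
    rw [Finset.mul_sum]
    congr 1
    apply Finset.sum_congr rfl
    intro s hs
    simp only [Finset.mem_powersetCard] at hs
    have hi1 : i ∉ s := fun h => (Finset.notMem_erase i F) (hs.1 h)
    rw [Finset.prod_insert hi1]
  · rw [Finset.disjoint_left]
    intro s hs hs'
    simp only [Finset.mem_powersetCard] at hs
    simp only [Finset.mem_image] at hs'
    obtain ⟨t, _, rfl⟩ := hs'
    exact (Finset.notMem_erase i F) (hs.1 (Finset.mem_insert_self i t))

lemma esym_pos {F : Finset ι} {k : ℕ} {x : ι → ℝ} (hx : ∀ i ∈ F, 0 < x i)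
    (hk : k ≤ F.card) : 0 < esym F k x := by
  apply Finset.sum_pos
  · intro s hs
    simp only [Finset.mem_powersetCard] at hs
    exact Finset.prod_pos fun i hi => hx i (hs.1 hi)
  · exact Finset.powersetCard_nonempty.mpr hk

lemma esym_nonneg {F : Finset ι} {k : ℕ} {x : ι → ℝ} (hx : ∀ i ∈ F, 0 ≤ x i) :
    0 ≤ esym F k x :=
  Finset.sum_nonneg fun s hs => Finset.prod_nonneg fun i hi => by
    simp only [Finset.mem_powersetCard] at hs; exact hx i (hs.1 hi)

lemma esym_one (F : Finset ι) (x : ι → ℝ) : esym F 1 x = ∑ i ∈ F, x i := by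
  unfold esym
  rw [Finset.powersetCard_one]
  rw [Finset.sum_map]
  simp

lemma esym_mono {F : Finset ι} {k : ℕ} {x y : ι → ℝ} (hx : ∀ i ∈ F, 0 ≤ x i)
    (hxy : ∀ i ∈ F, x i ≤ y i) : esym F k x ≤ esym F k y := by
  apply Finset.sum_le_sum
  intro s hs
  simp only [Finset.mem_powersetCard] at hs
  exact Finset.prod_le_prod (fun i hi => hx i (hs.1 hi)) (fun i hi => hxy i (hs.1 hi))

lemma esym_euler (F : Finset ι) (k : ℕ) (x : ι → ℝ) :
    ∑ i ∈ F, x i * esym (F.erase i) k x = (k+1 : ℝ) * esym F (k+1) x := by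
  have lhs : ∑ i ∈ F, x i * esym (F.erase i) k x
      = ∑ p ∈ F.sigma (fun i => (F.erase i).powersetCard k), x p.1 * ∏ j ∈ p.2, x j := by
    rw [Finset.sum_sigma]
    exact Finset.sum_congr rfl fun i _ => by rw [esym, Finset.mul_sum]
  have rhs : (k+1 : ℝ) * esym F (k+1) x
      = ∑ p ∈ (F.powersetCard (k+1)).sigma (fun t => t), x p.2 * ∏ j ∈ p.1.erase p.2, x j := by
    rw [Finset.sum_sigma, esym, Finset.mul_sum]
    refine Finset.sum_congr rfl fun t ht => ?_
    simp only [Finset.mem_powersetCard] at ht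
    calc (k+1:ℝ) * ∏ j ∈ t, x j = ∑ _i ∈ t, ∏ j ∈ t, x j := by
          rw [Finset.sum_const, ht.2]; push_cast; ring
      _ = ∑ i ∈ t, x i * ∏ j ∈ t.erase i, x j :=
          Finset.sum_congr rfl fun i hi => (Finset.mul_prod_erase t x hi).symm
  rw [lhs, rhs]
  refine Finset.sum_nbij' (i := fun p => ⟨insert p.1 p.2, p.1⟩)
    (j := fun p => ⟨p.2, p.1.erase p.2⟩) ?_ ?_ ?_ ?_ ?_
  · rintro ⟨i, s⟩ hp
    simp only [Finset.mem_sigma, Finset.mem_powersetCard] at hp ⊢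
    obtain ⟨hiF, hsub, hcard⟩ := hp
    rw [Finset.subset_erase] at hsub
    exact ⟨⟨Finset.insert_subset hiF hsub.1, by rw [Finset.card_insert_of_notMem hsub.2, hcard]⟩,
      Finset.mem_insert_self _ _⟩
  · rintro ⟨t, i⟩ hp
    simp only [Finset.mem_sigma, Finset.mem_powersetCard] at hp ⊢
    obtain ⟨⟨hsub, hcard⟩, hit⟩ := hp
    refine ⟨hsub hit, ?_, ?_⟩
    · rw [Finset.subset_erase]
      exact ⟨(Finset.erase_subset _ _).trans hsub, Finset.notMem_erase _ _⟩
    · rw [Finset.card_erase_of_mem hit, hcard]; rfl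
  · rintro ⟨i, s⟩ hp
    simp only [Finset.mem_sigma, Finset.mem_powersetCard] at hp
    obtain ⟨hiF, hsub, hcard⟩ := hp
    rw [Finset.subset_erase] at hsub
    exact congrArg (Sigma.mk i) (Finset.erase_insert hsub.2)
  · rintro ⟨t, i⟩ hp
    simp only [Finset.mem_sigma] at hp
    exact congrArg (fun u => Sigma.mk u i) (Finset.insert_erase hp.2)
  · rintro ⟨i, s⟩ hp
    simp only [Finset.mem_sigma, Finset.mem_powersetCard] at hp
    obtain ⟨hiF, hsub, hcard⟩ := hp
    rw [Finset.subset_erase] at hsub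
    simp only []
    rw [Finset.erase_insert hsub.2]

lemma rat_formula {F : Finset ι} {m : ℕ} (hkF : m + 2 ≤ F.card) {x : ι → ℝ}
    (hx : ∀ i ∈ F, 0 < x i) :
    ((m:ℝ)+2) * (esym F (m+2) x / esym F (m+1) x) =
      ∑ i ∈ F, x i * (esym (F.erase i) (m+1) x / esym (F.erase i) m x) /
        (x i + esym (F.erase i) (m+1) x / esym (F.erase i) m x) := by
  have hA : 0 < esym F (m+1) x := esym_pos hx (by omega)
  have key : ((m:ℝ)+2) * (esym F (m+2) x / esym F (m+1) x)
      = ∑ i ∈ F, x i * esym (F.erase i) (m+1) x / esym F (m+1) x := by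
    rw [← Finset.sum_div, esym_euler F (m+1) x]
    push_cast; ring
  rw [key]
  refine Finset.sum_congr rfl fun i hi => ?_
  have hcard : m + 1 ≤ (F.erase i).card := by
    rw [Finset.card_erase_of_mem hi]; omega
  have hxe : ∀ j ∈ F.erase i, 0 < x j := fun j hj => hx j (Finset.mem_of_mem_erase hj)
  have ha : 0 < esym (F.erase i) m x := esym_pos hxe (by omega)
  have hb : 0 < esym (F.erase i) (m+1) x := esym_pos hxe hcard
  have hxi : 0 < x i := hx i hi
  rw [esym_erase hi m x]
  field_simp

lemma milne {u v ρ σ τ : ℝ} (hu : 0 < u) (hv : 0 < v) (hρ : 0 < ρ) (hσ : 0 < σ)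
    (hτ : ρ + σ ≤ τ) :
    u*ρ/(u+ρ) + v*σ/(v+σ) ≤ (u+v)*τ/((u+v)+τ) := by
  have hτ0 : 0 < τ := lt_of_lt_of_le (by positivity) hτ
  have h1 : u*ρ/(u+ρ) + v*σ/(v+σ) ≤ (u+v)*(ρ+σ)/((u+v)+(ρ+σ)) := by
    rw [div_add_div _ _ (by positivity) (by positivity),
      div_le_div_iff₀ (by positivity) (by positivity)]
    nlinarith [sq_nonneg (u*σ - v*ρ), mul_pos hu hv, mul_pos hρ hσ]
  refine h1.trans ?_
  rw [div_le_div_iff₀ (by positivity) (by positivity)]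
  nlinarith [sq_nonneg (u+v), mul_pos (mul_pos hu hv) hτ0]

theorem ML (k : ℕ) : ∀ (F : Finset ι) (x y : ι → ℝ), k + 1 ≤ F.card →
    (∀ i ∈ F, 0 < x i) → (∀ i ∈ F, 0 < y i) →
    esym F (k+1) x / esym F k x + esym F (k+1) y / esym F k y ≤
      esym F (k+1) (x+y) / esym F k (x+y) := by
  induction k with
  | zero =>
    intro F x y _ _ _
    rw [esym_zero, esym_zero, esym_zero, div_one, div_one, div_one,
      esym_one, esym_one, esym_one]
    simp [Finset.sum_add_distrib]
  | succ m ih =>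
    intro F x y hcard hx hy
    have hxy : ∀ i ∈ F, 0 < x i + y i := fun i hi => by
      have := hx i hi; have := hy i hi; linarith
    have hxy' : ∀ i ∈ F, 0 < (x + y) i := hxy
    have fx := rat_formula hcard hx
    have fy := rat_formula hcard hy
    have fxy := rat_formula hcard hxy'
    have hpos : (0:ℝ) < (m:ℝ) + 2 := by positivity
    rw [← mul_le_mul_iff_right₀ hpos, mul_add, fx, fy, fxy, ← Finset.sum_add_distrib]
    refine Finset.sum_le_sum fun i hi => ?_
    have hcard' : m + 1 ≤ (F.erase i).card := by
      rw [Finset.card_erase_of_mem hi]; omega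
    have hxe : ∀ j ∈ F.erase i, 0 < x j := fun j hj => hx j (Finset.mem_of_mem_erase hj)
    have hye : ∀ j ∈ F.erase i, 0 < y j := fun j hj => hy j (Finset.mem_of_mem_erase hj)
    have hτ := ih (F.erase i) x y hcard' hxe hye
    have hρ : 0 < esym (F.erase i) (m+1) x / esym (F.erase i) m x :=
      div_pos (esym_pos hxe hcard') (esym_pos hxe (by omega))
    have hσ : 0 < esym (F.erase i) (m+1) y / esym (F.erase i) m y :=
      div_pos (esym_pos hye hcard') (esym_pos hye (by omega))
    have hxi := hx i hi
    have hyi := hy i hi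
    have hm := milne hxi hyi hρ hσ hτ
    simpa [Pi.add_apply] using hm

lemma esym_eq_prod_rat {F : Finset ι} {x : ι → ℝ} (hx : ∀ i ∈ F, 0 < x i) :
    ∀ {k : ℕ}, k ≤ F.card →
      esym F k x = ∏ j ∈ Finset.range k, (esym F (j+1) x / esym F j x) := by
  intro k
  induction k with
  | zero => intro _; simp [esym_zero]
  | succ m ih =>
    intro hm
    rw [Finset.prod_range_succ, ← ih (by omega)]
    have h0 : esym F m x ≠ 0 := ne_of_gt (esym_pos hx (by omega))
    field_simp

lemma mahler {k : ℕ} (hk : 0 < k) {a b : ℕ → ℝ}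
    (ha : ∀ j ∈ Finset.range k, 0 < a j) (hb : ∀ j ∈ Finset.range k, 0 < b j) :
    (∏ j ∈ Finset.range k, a j) ^ ((k:ℝ)⁻¹) + (∏ j ∈ Finset.range k, b j) ^ ((k:ℝ)⁻¹)
      ≤ (∏ j ∈ Finset.range k, (a j + b j)) ^ ((k:ℝ)⁻¹) := by
  set c : ℕ → ℝ := fun j => a j + b j with hc
  have hcpos : ∀ j ∈ Finset.range k, 0 < c j := fun j hj => by
    have := ha j hj; have := hb j hj; simp only [hc]; linarith
  have hPc : 0 < ∏ j ∈ Finset.range k, c j := Finset.prod_pos hcpos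
  have hw : ∑ _j ∈ Finset.range k, (k:ℝ)⁻¹ = 1 := by
    rw [Finset.sum_const, Finset.card_range, nsmul_eq_mul]
    field_simp
  have key : ∀ (u : ℕ → ℝ), (∀ j ∈ Finset.range k, 0 < u j) →
      (∀ j ∈ Finset.range k, u j ≤ c j) →
      (∏ j ∈ Finset.range k, u j) ^ ((k:ℝ)⁻¹)
        ≤ (∑ j ∈ Finset.range k, (k:ℝ)⁻¹ * (u j / c j))
            * (∏ j ∈ Finset.range k, c j) ^ ((k:ℝ)⁻¹) := by
    intro u hu huc
    have h1 : (∏ j ∈ Finset.range k, (u j / c j)) ^ ((k:ℝ)⁻¹)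
        ≤ ∑ j ∈ Finset.range k, (k:ℝ)⁻¹ * (u j / c j) := by
      rw [← Real.finset_prod_rpow _ _ (fun j hj => (div_pos (hu j hj) (hcpos j hj)).le) _]
      exact Real.geom_mean_le_arith_mean_weighted _ _ _
        (fun j _ => by positivity) hw (fun j hj => (div_pos (hu j hj) (hcpos j hj)).le)
    calc (∏ j ∈ Finset.range k, u j) ^ ((k:ℝ)⁻¹)
        = ((∏ j ∈ Finset.range k, (u j / c j)) * ∏ j ∈ Finset.range k, c j) ^ ((k:ℝ)⁻¹) := by
          rw [← Finset.prod_mul_distrib]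
          congr 1
          exact Finset.prod_congr rfl fun j hj => by
            rw [div_mul_cancel₀ _ (ne_of_gt (hcpos j hj))]
      _ = (∏ j ∈ Finset.range k, (u j / c j)) ^ ((k:ℝ)⁻¹)
            * (∏ j ∈ Finset.range k, c j) ^ ((k:ℝ)⁻¹) := by
          rw [Real.mul_rpow
            (Finset.prod_nonneg fun j hj => (div_pos (hu j hj) (hcpos j hj)).le) hPc.le]
      _ ≤ _ := by
          apply mul_le_mul_of_nonneg_right h1 (Real.rpow_nonneg hPc.le _)
  have hA := key a ha (fun j hj => by have := hb j hj; simp only [hc]; linarith)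
  have hB := key b hb (fun j hj => by have := ha j hj; simp only [hc]; linarith)
  have hsum : (∑ j ∈ Finset.range k, (k:ℝ)⁻¹ * (a j / c j))
      + (∑ j ∈ Finset.range k, (k:ℝ)⁻¹ * (b j / c j)) = 1 := by
    rw [← Finset.sum_add_distrib, ← hw]
    refine Finset.sum_congr rfl fun j hj => ?_
    have h0 : c j ≠ 0 := ne_of_gt (hcpos j hj)
    field_simp
    ring
  calc (∏ j ∈ Finset.range k, a j) ^ ((k:ℝ)⁻¹) + (∏ j ∈ Finset.range k, b j) ^ ((k:ℝ)⁻¹)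
      ≤ ((∑ j ∈ Finset.range k, (k:ℝ)⁻¹ * (a j / c j))
        + (∑ j ∈ Finset.range k, (k:ℝ)⁻¹ * (b j / c j)))
          * (∏ j ∈ Finset.range k, c j) ^ ((k:ℝ)⁻¹) := by
        rw [add_mul]; exact add_le_add hA hB
    _ = (∏ j ∈ Finset.range k, c j) ^ ((k:ℝ)⁻¹) := by rw [hsum, one_mul]

lemma esym_rpow_superadd_pos {F : Finset ι} {k : ℕ} (hk : 1 ≤ k) (hkF : k ≤ F.card)
    {x y : ι → ℝ} (hx : ∀ i ∈ F, 0 < x i) (hy : ∀ i ∈ F, 0 < y i) :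
    (esym F k x) ^ ((k:ℝ)⁻¹) + (esym F k y) ^ ((k:ℝ)⁻¹) ≤ (esym F k (x+y)) ^ ((k:ℝ)⁻¹) := by
  have hxy : ∀ i ∈ F, 0 < (x+y) i := fun i hi => by
    have := hx i hi; have := hy i hi; simp only [Pi.add_apply]; linarith
  set a : ℕ → ℝ := fun j => esym F (j+1) x / esym F j x with hadef
  set b : ℕ → ℝ := fun j => esym F (j+1) y / esym F j y with hbdef
  have ha : ∀ j ∈ Finset.range k, 0 < a j := fun j hj => by
    simp only [Finset.mem_range] at hj
    exact div_pos (esym_pos hx (by omega)) (esym_pos hx (by omega))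
  have hb : ∀ j ∈ Finset.range k, 0 < b j := fun j hj => by
    simp only [Finset.mem_range] at hj
    exact div_pos (esym_pos hy (by omega)) (esym_pos hy (by omega))
  have habc : ∀ j ∈ Finset.range k,
      a j + b j ≤ esym F (j+1) (x+y) / esym F j (x+y) := fun j hj => by
    simp only [Finset.mem_range] at hj
    exact ML j F x y (by omega) hx hy
  rw [esym_eq_prod_rat hx hkF, esym_eq_prod_rat hy hkF, esym_eq_prod_rat hxy hkF]
  refine (mahler (by omega) ha hb).trans ?_
  apply Real.rpow_le_rpow (Finset.prod_nonneg fun j hj => by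
    have := ha j hj; have := hb j hj; linarith) ?_ (by positivity)
  exact Finset.prod_le_prod (fun j hj => by have := ha j hj; have := hb j hj; linarith) habc

lemma esym_continuous_affine (F : Finset ι) (k : ℕ) (z w : ι → ℝ) :
    Continuous fun ε : ℝ => esym F k (fun i => z i + ε * w i) := by
  unfold esym
  refine continuous_finset_sum _ fun s _ => continuous_finset_prod _ fun i _ => ?_
  continuity

lemma esym_rpow_superadd {F : Finset ι} {k : ℕ} (hk : 1 ≤ k) (hkF : k ≤ F.card)
    {x y : ι → ℝ} (hx : ∀ i ∈ F, 0 ≤ x i) (hy : ∀ i ∈ F, 0 ≤ y i) :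
    (esym F k x) ^ ((k:ℝ)⁻¹) + (esym F k y) ^ ((k:ℝ)⁻¹) ≤ (esym F k (x+y)) ^ ((k:ℝ)⁻¹) := by
  set f1 : ℝ → ℝ := fun ε => (esym F k (fun i => x i + ε * 1)) ^ ((k:ℝ)⁻¹) with hf1
  set f2 : ℝ → ℝ := fun ε => (esym F k (fun i => y i + ε * 1)) ^ ((k:ℝ)⁻¹) with hf2
  set f3 : ℝ → ℝ := fun ε => (esym F k (fun i => (x i + y i) + ε * 2)) ^ ((k:ℝ)⁻¹) with hf3
  have hineq : ∀ ε ∈ Set.Ioi (0:ℝ), f1 ε + f2 ε ≤ f3 ε := by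
    intro ε hε
    simp only [Set.mem_Ioi] at hε
    have hX : ∀ i ∈ F, 0 < x i + ε * 1 := fun i hi => by have := hx i hi; nlinarith
    have hY : ∀ i ∈ F, 0 < y i + ε * 1 := fun i hi => by have := hy i hi; nlinarith
    have := esym_rpow_superadd_pos hk hkF hX hY
    have heq : (fun i => x i + ε * 1) + (fun i => y i + ε * 1)
        = fun i => (x i + y i) + ε * 2 := by funext i; simp only [Pi.add_apply]; ring
    rw [heq] at this
    exact this
  have cont : ∀ (z w : ι → ℝ), ContinuousAt
      (fun ε : ℝ => (esym F k (fun i => z i + ε * w i)) ^ ((k:ℝ)⁻¹)) 0 := by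
    intro z w
    exact (Real.continuousAt_rpow_const _ _ (Or.inr (by positivity))).comp
      (esym_continuous_affine F k z w).continuousAt
  have h1 : Tendsto f1 (𝓝[>] 0) (𝓝 (f1 0)) :=
    ((cont x 1).tendsto).mono_left nhdsWithin_le_nhds
  have h2 : Tendsto f2 (𝓝[>] 0) (𝓝 (f2 0)) :=
    ((cont y 1).tendsto).mono_left nhdsWithin_le_nhds
  have h3 : Tendsto f3 (𝓝[>] 0) (𝓝 (f3 0)) :=
    ((cont (fun i => x i + y i) 2).tendsto).mono_left nhdsWithin_le_nhds
  have key : f1 0 + f2 0 ≤ f3 0 := by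
    refine le_of_tendsto_of_tendsto (h1.add h2) h3 ?_
    exact eventually_mem_nhdsWithin.mono fun ε hε => hineq ε hε
  have e1 : (fun i => x i + (0:ℝ) * 1) = x := by funext i; ring
  have e2 : (fun i => y i + (0:ℝ) * 1) = y := by funext i; ring
  have e3 : (fun i => (x i + y i) + (0:ℝ) * 2) = x + y := by
    funext i; simp only [Pi.add_apply]; ring
  simp only [hf1, hf2, hf3, e1, e2, e3] at key
  exact key

lemma esym_smul (F : Finset ι) (k : ℕ) (c : ℝ) (x : ι → ℝ) :
    esym F k (fun i => c * x i) = c^k * esym F k x := by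
  unfold esym
  rw [Finset.mul_sum]
  refine Finset.sum_congr rfl fun s hs => ?_
  simp only [Finset.mem_powersetCard] at hs
  rw [Finset.prod_mul_distrib, Finset.prod_const, hs.2]

lemma esym_rpow_smul {F : Finset ι} {k : ℕ} (hk : 1 ≤ k) {c : ℝ} (hc : 0 ≤ c)
    {x : ι → ℝ} (hx : ∀ i ∈ F, 0 ≤ x i) :
    (esym F k (fun i => c * x i)) ^ ((k:ℝ)⁻¹) = c * (esym F k x) ^ ((k:ℝ)⁻¹) := by
  rw [esym_smul, Real.mul_rpow (pow_nonneg hc k) (esym_nonneg hx), ← Real.rpow_natCast c k,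
    ← Real.rpow_mul hc]
  rw [mul_inv_cancel₀ (Nat.cast_ne_zero.mpr (by omega)), Real.rpow_one]

/-- Concavity of `x ↦ esym(f∘x)^{1/k}` over all of `ℝ^n`. -/
theorem psi_concaveOn [Fintype ι] {k : ℕ} (hk : 1 ≤ k) (hkcard : k ≤ Fintype.card ι)
    (f : ℝ → ℝ) (hf0 : ∀ t, 0 ≤ f t) (hf : ConcaveOn ℝ Set.univ f) :
    ConcaveOn ℝ Set.univ
      (fun x : ι → ℝ => (esym Finset.univ k (fun i => f (x i))) ^ ((k:ℝ)⁻¹)) := by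
  refine ⟨convex_univ, ?_⟩
  intro x _ y _ a b ha hb hab
  dsimp only
  have hcard : k ≤ (Finset.univ : Finset ι).card := by
    simpa [Finset.card_univ] using hkcard
  have step1 : ∀ i : ι, a * f (x i) + b * f (y i) ≤ f (a * x i + b * y i) := by
    intro i
    have := hf.2 (Set.mem_univ (x i)) (Set.mem_univ (y i)) ha hb hab
    simpa [smul_eq_mul] using this
  have hax : ∀ i ∈ (Finset.univ : Finset ι), 0 ≤ a * f (x i) := fun i _ => by
    have := hf0 (x i); positivity
  have hby : ∀ i ∈ (Finset.univ : Finset ι), 0 ≤ b * f (y i) := fun i _ => by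
    have := hf0 (y i); positivity
  have hsup := esym_rpow_superadd hk hcard hax hby
  have heq : (fun i => a * f (x i)) + (fun i => b * f (y i))
      = fun i => a * f (x i) + b * f (y i) := rfl
  rw [heq] at hsup
  have hmono : (esym Finset.univ k (fun i => a * f (x i) + b * f (y i))) ^ ((k:ℝ)⁻¹)
      ≤ (esym Finset.univ k (fun i => f ((a • x + b • y) i))) ^ ((k:ℝ)⁻¹) := by
    apply Real.rpow_le_rpow
    · exact esym_nonneg fun i _ => by have := hf0 (x i); have := hf0 (y i); positivity
    · apply esym_mono (fun i _ => by have := hf0 (x i); have := hf0 (y i); positivity)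
      intro i _
      simpa [smul_eq_mul] using step1 i
    · positivity
  have hhomx := esym_rpow_smul (F := (Finset.univ : Finset ι)) hk ha
    (x := fun i => f (x i)) (fun i _ => hf0 (x i))
  have hhomy := esym_rpow_smul (F := (Finset.univ : Finset ι)) hk hb
    (x := fun i => f (y i)) (fun i _ => hf0 (y i))
  calc a • (esym Finset.univ k (fun i => f (x i))) ^ ((k:ℝ)⁻¹)
        + b • (esym Finset.univ k (fun i => f (y i))) ^ ((k:ℝ)⁻¹)
      = (esym Finset.univ k (fun i => a * f (x i))) ^ ((k:ℝ)⁻¹)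
        + (esym Finset.univ k (fun i => b * f (y i))) ^ ((k:ℝ)⁻¹) := by
        rw [hhomx, hhomy]; simp [smul_eq_mul]
    _ ≤ (esym Finset.univ k (fun i => a * f (x i) + b * f (y i))) ^ ((k:ℝ)⁻¹) := hsup
    _ ≤ _ := hmono

lemma esym_perm [Fintype ι] {k : ℕ} (x : ι → ℝ) (σ : Equiv.Perm ι) :
    esym Finset.univ k (fun i => x (σ i)) = esym Finset.univ k x := by
  unfold esym
  refine Finset.sum_nbij' (i := fun s => s.map σ.toEmbedding)
    (j := fun s => s.map σ.symm.toEmbedding) ?_ ?_ ?_ ?_ ?_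
  · intro s hs
    simp only [Finset.mem_powersetCard] at hs ⊢
    exact ⟨Finset.subset_univ _, by rw [Finset.card_map, hs.2]⟩
  · intro s hs
    simp only [Finset.mem_powersetCard] at hs ⊢
    exact ⟨Finset.subset_univ _, by rw [Finset.card_map, hs.2]⟩
  · intro s _
    simp [Finset.map_map]
  · intro s _
    simp [Finset.map_map]
  · intro s _
    rw [Finset.prod_map]
    rfl

end KT

/-! ### Matrix-side auxiliary lemmas -/

namespace KT
open Polynomial Finset

variable {n : ℕ}

lemma det_piecewise_one (A : Matrix (Fin n) (Fin n) ℂ[X]) (s : Finset (Fin n)) :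
    Matrix.det (s.piecewise A (1 : Matrix (Fin n) (Fin n) ℂ[X]))
      = (A.submatrix (Subtype.val : {i : Fin n // i ∈ s} → Fin n)
          (Subtype.val : {i : Fin n // i ∈ s} → Fin n)).det := by
  have hinv := (Matrix.det_submatrix_equiv_self (Equiv.sumCompl (fun i : Fin n => i ∈ s))
    (s.piecewise A (1 : Matrix (Fin n) (Fin n) ℂ[X]))).symm
  rw [hinv]
  have hblocks : Matrix.submatrix (s.piecewise A (1 : Matrix (Fin n) (Fin n) ℂ[X]))
      (Equiv.sumCompl (fun i : Fin n => i ∈ s)) (Equiv.sumCompl (fun i : Fin n => i ∈ s))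
      = Matrix.fromBlocks
          (A.submatrix (Subtype.val : {i : Fin n // i ∈ s} → Fin n) Subtype.val)
          (A.submatrix (Subtype.val : {i : Fin n // i ∈ s} → Fin n) Subtype.val)
          0 1 := by
    refine Matrix.ext fun i j => ?_
    rcases i with i | i <;> rcases j with j | j
    · simp [Matrix.submatrix_apply, Finset.piecewise_eq_of_mem _ _ _ i.2]
      exact congrFun (Finset.piecewise_eq_of_mem s A (1 : Matrix (Fin n) (Fin n) ℂ[X]) i.2) (j : Fin n)
    · simp [Matrix.submatrix_apply, Finset.piecewise_eq_of_mem _ _ _ i.2]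
      exact congrFun (Finset.piecewise_eq_of_mem s A (1 : Matrix (Fin n) (Fin n) ℂ[X]) i.2) (j : Fin n)
    · simp only [Matrix.submatrix_apply, Equiv.sumCompl_apply_inl, Equiv.sumCompl_apply_inr,
        Matrix.fromBlocks_apply₂₁, Matrix.zero_apply, Finset.piecewise_eq_of_notMem _ _ _ i.2]
      have hne : (i : Fin n) ≠ (j : Fin n) := fun h => i.2 (by rw [h]; exact j.2)
      exact (congrFun (Finset.piecewise_eq_of_notMem s A (1 : Matrix (Fin n) (Fin n) ℂ[X]) i.2)
        (j : Fin n)).trans (Matrix.one_apply_ne hne)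
    · simp only [Matrix.submatrix_apply, Equiv.sumCompl_apply_inr,
        Matrix.fromBlocks_apply₂₂, Finset.piecewise_eq_of_notMem _ _ _ i.2]
      refine (congrFun (Finset.piecewise_eq_of_notMem s A (1 : Matrix (Fin n) (Fin n) ℂ[X]) i.2)
        (j : Fin n)).trans ?_
      rw [Matrix.one_apply, Matrix.one_apply]
      simp [Subtype.ext_iff]
  rw [hblocks, Matrix.det_fromBlocks_zero₂₁, Matrix.det_one, mul_one]

lemma det_one_add_X_smul_eq (M : Matrix (Fin n) (Fin n) ℂ) :
    (1 + (X : ℂ[X]) • M.map C).det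
      = ∑ s : Finset (Fin n), X ^ s.card *
          C ((M.submatrix (Subtype.val : {i : Fin n // i ∈ s} → Fin n)
            (Subtype.val : {i : Fin n // i ∈ s} → Fin n)).det) := by
  have key := (Matrix.detRowAlternating (R := ℂ[X]) (n := Fin n)).toMultilinearMap.map_add_univ
    ((X : ℂ[X]) • M.map C) (1 : Matrix (Fin n) (Fin n) ℂ[X])
  have h0 : (1 : Matrix (Fin n) (Fin n) ℂ[X]) + (X : ℂ[X]) • M.map C
      = ((X : ℂ[X]) • M.map C) + (1 : Matrix (Fin n) (Fin n) ℂ[X]) := add_comm _ _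
  rw [h0]
  refine Eq.trans key (Finset.sum_congr rfl fun s _ => ?_)
  show Matrix.det (s.piecewise ((X : ℂ[X]) • M.map C) (1 : Matrix (Fin n) (Fin n) ℂ[X])) = _
  rw [det_piecewise_one]
  have hsub : ((X : ℂ[X]) • M.map C).submatrix (Subtype.val : {i : Fin n // i ∈ s} → Fin n)
      (Subtype.val : {i : Fin n // i ∈ s} → Fin n)
      = (X : ℂ[X]) • ((M.submatrix (Subtype.val : {i : Fin n // i ∈ s} → Fin n)
          (Subtype.val : {i : Fin n // i ∈ s} → Fin n)).map C) := by
    ext i j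
    simp [Matrix.map_apply]
  rw [hsub, Matrix.det_smul]
  congr 1
  · congr 1
    simp [Fintype.card_subtype]
  · rw [← RingHom.mapMatrix_apply, ← RingHom.map_det]

lemma coeff_sum_powers (g : Finset (Fin n) → ℂ) (k : ℕ) :
    (∑ s : Finset (Fin n), (X : ℂ[X]) ^ s.card * C (g s)).coeff k
      = ∑ s ∈ Finset.powersetCard k (Finset.univ : Finset (Fin n)), g s := by
  rw [Polynomial.finset_sum_coeff]
  rw [Finset.powersetCard_eq_filter, Finset.powerset_univ]
  rw [Finset.sum_filter]
  refine Finset.sum_congr rfl fun s _ => ?_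
  rw [mul_comm, Polynomial.C_mul_X_pow_eq_monomial, Polynomial.coeff_monomial]

lemma trK_eq_coeff (M : Matrix (Fin n) (Fin n) ℂ) (k : ℕ) :
    trK k M = ((1 + (X : ℂ[X]) • M.map C).det).coeff k := by
  rw [det_one_add_X_smul_eq, coeff_sum_powers]
  rfl

lemma det_poly_conj {P Q N : Matrix (Fin n) (Fin n) ℂ} (h1 : P * Q = 1) (h2 : Q * P = 1) :
    (1 + (X : ℂ[X]) • (P * N * Q).map C).det = (1 + (X : ℂ[X]) • N.map C).det := by
  have hmap : ∀ (A B : Matrix (Fin n) (Fin n) ℂ), (A*B).map C = A.map C * B.map C := by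
    intro A B
    rw [← RingHom.mapMatrix_apply, ← RingHom.mapMatrix_apply, ← RingHom.mapMatrix_apply, map_mul]
  have hone : (1 : Matrix (Fin n) (Fin n) ℂ).map C = 1 := by
    rw [← RingHom.mapMatrix_apply, map_one]
  have key : (1 : Matrix (Fin n) (Fin n) ℂ[X]) + (X : ℂ[X]) • (P * N * Q).map C
      = P.map C * (1 + (X : ℂ[X]) • N.map C) * Q.map C := by
    rw [Matrix.mul_add, Matrix.add_mul, mul_one, ← hmap, h1, hone]
    rw [hmap, hmap, Matrix.mul_smul, Matrix.smul_mul]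
  rw [key, Matrix.det_mul, Matrix.det_mul, mul_comm, ← mul_assoc, ← Matrix.det_mul, ← hmap, h2,
    hone, Matrix.det_one, one_mul]

lemma det_poly_diag (d : Fin n → ℂ) :
    (1 + (X : ℂ[X]) • (Matrix.diagonal d).map C).det = ∏ i, (1 + X * C (d i)) := by
  rw [Matrix.diagonal_map (map_zero C)]
  have h1 : (X : ℂ[X]) • Matrix.diagonal (fun i => C (d i))
      = Matrix.diagonal (fun i => X * C (d i)) := by
    ext i j
    by_cases h : i = j <;> simp [Matrix.diagonal, h]
  rw [h1, ← Matrix.diagonal_one, Matrix.diagonal_add, Matrix.det_diagonal]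

lemma coeff_prod_one_add (d : Fin n → ℂ) (k : ℕ) :
    (∏ i, (1 + (X:ℂ[X]) * C (d i))).coeff k
      = ∑ s ∈ Finset.powersetCard k (Finset.univ : Finset (Fin n)), ∏ i ∈ s, d i := by
  have h1 : ∀ i : Fin n, (1 + (X:ℂ[X]) * C (d i)) = (X * C (d i)) + 1 := fun i => add_comm _ _
  rw [Finset.prod_congr rfl fun i _ => h1 i, Finset.prod_add]
  have h2 : ∀ t : Finset (Fin n),
      (∏ i ∈ t, ((X:ℂ[X]) * C (d i))) * (∏ _i ∈ Finset.univ \ t, (1:ℂ[X]))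
      = X ^ t.card * C (∏ i ∈ t, d i) := by
    intro t
    rw [Finset.prod_const_one, mul_one, Finset.prod_mul_distrib, Finset.prod_const, map_prod]
  rw [Finset.sum_congr rfl fun t _ => h2 t, Finset.powerset_univ, coeff_sum_powers]

lemma trK_unitary_diag {U : Matrix (Fin n) (Fin n) ℂ}
    (hU : U ∈ Matrix.unitaryGroup (Fin n) ℂ) (d : Fin n → ℂ) (k : ℕ) :
    trK k (U * Matrix.diagonal d * star U)
      = ∑ s ∈ Finset.powersetCard k (Finset.univ : Finset (Fin n)), ∏ i ∈ s, d i := by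
  rw [trK_eq_coeff, det_poly_conj (Matrix.mem_unitaryGroup_iff.mp hU)
    (Matrix.mem_unitaryGroup_iff'.mp hU), det_poly_diag, coeff_prod_one_add]

lemma trK_cfc_re {A : Matrix (Fin n) (Fin n) ℂ} (hA : A.IsHermitian) (f : ℝ → ℝ) (k : ℕ) :
    (trK k (cfc f A)).re = esym Finset.univ k (fun i => f (hA.eigenvalues i)) := by
  rw [hA.cfc_eq f]
  have hcfc : hA.cfc f = (Matrix.IsHermitian.eigenvectorUnitary hA : Matrix (Fin n) (Fin n) ℂ)
      * Matrix.diagonal (RCLike.ofReal ∘ f ∘ hA.eigenvalues)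
      * star (Matrix.IsHermitian.eigenvectorUnitary hA : Matrix (Fin n) (Fin n) ℂ) := rfl
  rw [hcfc, trK_unitary_diag (Matrix.IsHermitian.eigenvectorUnitary hA).2]
  have : (∑ s ∈ Finset.powersetCard k (Finset.univ : Finset (Fin n)),
      ∏ i ∈ s, (RCLike.ofReal ∘ f ∘ hA.eigenvalues) i)
      = ((esym Finset.univ k (fun i => f (hA.eigenvalues i)) : ℝ) : ℂ) := by
    unfold esym
    push_cast
    rfl
  rw [this, Complex.ofReal_re]

/-- Schur–Horn / Birkhoff step: for any concave symmetric function `g`, any unitary `W`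
and Hermitian `H`, `g` of the diagonal of `star W * H * W` dominates `g` of eigenvalues. -/
lemma g_eigenvalues_le_g_diag (g : (Fin n → ℝ) → ℝ) (hg : ConcaveOn ℝ Set.univ g)
    (hsym : ∀ (σ : Equiv.Perm (Fin n)) (x : Fin n → ℝ), g (fun i => x (σ i)) = g x)
    {W H : Matrix (Fin n) (Fin n) ℂ} (hW : W ∈ Matrix.unitaryGroup (Fin n) ℂ)
    (hH : H.IsHermitian) :
    g hH.eigenvalues ≤ g (fun i => ((star W * H * W) i i).re) := by
  set V : Matrix (Fin n) (Fin n) ℂ :=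
    (Matrix.IsHermitian.eigenvectorUnitary hH : Matrix (Fin n) (Fin n) ℂ) with hVdef
  have hV : V ∈ Matrix.unitaryGroup (Fin n) ℂ := (Matrix.IsHermitian.eigenvectorUnitary hH).2
  set T : Matrix (Fin n) (Fin n) ℂ := star W * V with hTdef
  have hTT : T * star T = 1 := by
    rw [hTdef, star_mul, star_star, mul_assoc, ← mul_assoc V,
      Matrix.mem_unitaryGroup_iff.mp hV, one_mul, Matrix.mem_unitaryGroup_iff'.mp hW]
  have hTT' : star T * T = 1 := by
    rw [mul_eq_one_comm] at hTT
    exact hTT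
  set S : Matrix (Fin n) (Fin n) ℝ := Matrix.of fun i j => Complex.normSq (T i j) with hSdef
  have hrow : ∀ i, ∑ j, Complex.normSq (T i j) = 1 := by
    intro i
    have h := congrFun (congrFun hTT i) i
    have : (T * star T) i i = ∑ j, ((Complex.normSq (T i j) : ℝ) : ℂ) := by
      rw [Matrix.mul_apply]
      refine Finset.sum_congr rfl fun j _ => ?_
      rw [Matrix.star_apply, Complex.star_def, Complex.mul_conj]
    rw [this] at h
    have h1 : ((∑ j, Complex.normSq (T i j) : ℝ) : ℂ) = 1 := by
      rw [Complex.ofReal_sum]; rw [h]; simp [Matrix.one_apply]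
    exact_mod_cast h1
  have hcol : ∀ j, ∑ i, Complex.normSq (T i j) = 1 := by
    intro j
    have h := congrFun (congrFun hTT' j) j
    have : (star T * T) j j = ∑ i, ((Complex.normSq (T i j) : ℝ) : ℂ) := by
      rw [Matrix.mul_apply]
      refine Finset.sum_congr rfl fun i _ => ?_
      rw [Matrix.star_apply, Complex.star_def, mul_comm, Complex.mul_conj]
    rw [this] at h
    have h1 : ((∑ i, Complex.normSq (T i j) : ℝ) : ℂ) = 1 := by
      rw [Complex.ofReal_sum]; rw [h]; simp [Matrix.one_apply]
    exact_mod_cast h1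
  have hS : S ∈ doublyStochastic ℝ (Fin n) := by
    rw [mem_doublyStochastic]
    refine ⟨fun i j => Complex.normSq_nonneg _, ?_, ?_⟩
    · funext i
      simp only [Matrix.mulVec, dotProduct, Pi.one_apply, mul_one, hSdef, Matrix.of_apply]
      exact hrow i
    · funext j
      simp only [Matrix.vecMul, dotProduct, Pi.one_apply, one_mul, hSdef, Matrix.of_apply]
      exact hcol j
  -- the diagonal is S applied to the eigenvalues
  have hdiag : (fun i => ((star W * H * W) i i).re) = S *ᵥ hH.eigenvalues := by
    have hWHW : star W * H * W
        = T * Matrix.diagonal (RCLike.ofReal ∘ hH.eigenvalues) * star T := by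
      conv_lhs => rw [hH.spectral_theorem, Unitary.conjStarAlgAut_apply]
      rw [hTdef, star_mul, star_star]
      simp only [Matrix.mul_assoc, hVdef]
    funext i
    rw [hWHW]
    have : (T * Matrix.diagonal ((RCLike.ofReal ∘ hH.eigenvalues : Fin n → ℂ)) * star T) i i
        = ∑ j, ((Complex.normSq (T i j) * hH.eigenvalues j : ℝ) : ℂ) := by
      rw [Matrix.mul_apply]
      refine Finset.sum_congr rfl fun j _ => ?_
      rw [Matrix.mul_diagonal, Matrix.star_apply, Complex.star_def]
      have heq : T i j * (RCLike.ofReal ∘ hH.eigenvalues : Fin n → ℂ) j * (starRingEnd ℂ) (T i j)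
          = (T i j * (starRingEnd ℂ) (T i j)) * ((hH.eigenvalues j : ℝ) : ℂ) := by
        have : ((RCLike.ofReal ∘ hH.eigenvalues : Fin n → ℂ)) j
            = ((hH.eigenvalues j : ℝ) : ℂ) := rfl
        rw [this]; ring
      rw [heq, Complex.mul_conj, ← Complex.ofReal_mul]
    rw [this, ← Complex.ofReal_sum, Complex.ofReal_re]
    simp only [Matrix.mulVec, dotProduct, hSdef, Matrix.of_apply]
  obtain ⟨w, hw0, hw1, hwS⟩ := exists_eq_sum_perm_of_mem_doublyStochastic hS
  have hperm : ∀ σ : Equiv.Perm (Fin n),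
      (σ.permMatrix ℝ) *ᵥ hH.eigenvalues = fun i => hH.eigenvalues (σ i) := by
    intro σ
    funext i
    simp [Matrix.mulVec, dotProduct, Equiv.Perm.permMatrix, PEquiv.toMatrix_apply,
      Equiv.toPEquiv_apply]
  have hd2 : S *ᵥ hH.eigenvalues
      = ∑ σ : Equiv.Perm (Fin n), w σ • (fun i => hH.eigenvalues (σ i)) := by
    funext i
    have hSij : ∀ i j, S i j = ∑ σ : Equiv.Perm (Fin n), w σ * (σ.permMatrix ℝ) i j := by
      intro i j
      conv_lhs => rw [← hwS]
      simp [Matrix.sum_apply, Matrix.smul_apply, smul_eq_mul]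
    simp only [Matrix.mulVec, dotProduct]
    rw [Finset.sum_congr rfl fun j _ => by rw [hSij i j, Finset.sum_mul]]
    rw [Finset.sum_comm]
    rw [Finset.sum_apply]
    refine Finset.sum_congr rfl fun σ _ => ?_
    simp only [Pi.smul_apply, smul_eq_mul]
    rw [Finset.sum_congr rfl fun j _ => mul_assoc (w σ) _ _, ← Finset.mul_sum]
    congr 1
    have := congrFun (hperm σ) i
    simpa [Matrix.mulVec, dotProduct] using this
  have jensen := hg.le_map_sum (t := (Finset.univ : Finset (Equiv.Perm (Fin n))))
    (w := w) (p := fun σ => (fun i => hH.eigenvalues (σ i)))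
    (fun σ _ => hw0 σ) hw1 (fun σ _ => Set.mem_univ _)
  have hLHS : ∑ σ : Equiv.Perm (Fin n), w σ • g (fun i => hH.eigenvalues (σ i))
      = g hH.eigenvalues := by
    rw [Finset.sum_congr rfl fun σ _ => by rw [hsym σ]]
    rw [← Finset.sum_smul, hw1, one_smul]
  rw [hLHS] at jensen
  rw [hdiag, hd2]
  exact jensen

end KT

/-- the k-trace preserves concavity of nonnegative scalar
functions (applied spectrally via the continuous functional calculus). -/
theorem ktrace_concavity_preserving {n k : ℕ} (hk : 1 ≤ k) (hkn : k ≤ n)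
    (f : ℝ → ℝ) (hf0 : ∀ x, 0 ≤ f x) (hf : ConcaveOn ℝ Set.univ f) :
    ConcaveOn ℝ {A : Matrix (Fin n) (Fin n) ℂ | A.PosSemidef}
      (fun A => (trK k (cfc f A)).re ^ ((k : ℝ)⁻¹)) := by
  classical
  -- the ψ function and its properties
  set ψ : (Fin n → ℝ) → ℝ :=
    fun x => (KT.esym Finset.univ k (fun i => f (x i))) ^ ((k:ℝ)⁻¹) with hψdef
  have hψ : ConcaveOn ℝ Set.univ ψ :=
    KT.psi_concaveOn hk (by simpa using hkn) f hf0 hf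
  have hψsym : ∀ (σ : Equiv.Perm (Fin n)) (x : Fin n → ℝ), ψ (fun i => x (σ i)) = ψ x := by
    intro σ x
    simp only [hψdef]
    rw [KT.esym_perm (fun i => f (x i)) σ]
  -- real smul of complex matrices
  have hsmulC : ∀ (a : ℝ) (M : Matrix (Fin n) (Fin n) ℂ), a • M = (a:ℂ) • M := by
    intro a M
    ext i j
    simp [Complex.real_smul]
  have hsmulPSD : ∀ (a : ℝ), 0 ≤ a → ∀ (M : Matrix (Fin n) (Fin n) ℂ), M.PosSemidef →
      (a • M).PosSemidef := by
    intro a ha M hM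
    rw [hsmulC]
    rw [Matrix.posSemidef_iff_dotProduct_mulVec]
    constructor
    · have := hM.1
      unfold Matrix.IsHermitian at this ⊢
      rw [Matrix.conjTranspose_smul, this]
      congr 1
      simp [Complex.star_def, Complex.conj_ofReal]
    · intro x
      rw [Matrix.smul_mulVec, dotProduct_smul]
      have h1 : (0:ℂ) ≤ (a:ℂ) := by exact_mod_cast ha
      have h2 := (Matrix.posSemidef_iff_dotProduct_mulVec.mp hM).2 x
      calc (0:ℂ) = (a:ℂ) * 0 := by ring
        _ ≤ (a:ℂ) * (dotProduct (star x) (M *ᵥ x)) := by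
            exact mul_le_mul_of_nonneg_left h2 h1
        _ = (a:ℂ) • (dotProduct (star x) (M *ᵥ x)) := by rw [smul_eq_mul]
  constructor
  · -- convexity of the PSD cone
    intro A hA B hB a b ha hb hab
    exact Matrix.PosSemidef.add (hsmulPSD a ha A hA) (hsmulPSD b hb B hB)
  intro A hA B hB a b ha hb hab
  dsimp only
  have hA' : (A : Matrix (Fin n) (Fin n) ℂ).PosSemidef := hA
  have hB' : (B : Matrix (Fin n) (Fin n) ℂ).PosSemidef := hB
  have hC' : (a • A + b • B).PosSemidef :=
    Matrix.PosSemidef.add (hsmulPSD a ha A hA') (hsmulPSD b hb B hB')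
  -- rewrite the three values via ψ of eigenvalues
  have hval : ∀ (M : Matrix (Fin n) (Fin n) ℂ) (hM : M.IsHermitian),
      (trK k (cfc f M)).re ^ ((k:ℝ)⁻¹) = ψ hM.eigenvalues := by
    intro M hM
    rw [KT.trK_cfc_re hM f k]
  rw [hval A hA'.1, hval B hB'.1, hval _ hC'.1]
  -- the diagonalizing unitary of C
  set W : Matrix (Fin n) (Fin n) ℂ :=
    (Matrix.IsHermitian.eigenvectorUnitary hC'.1 : Matrix (Fin n) (Fin n) ℂ) with hWdef
  have hW : W ∈ Matrix.unitaryGroup (Fin n) ℂ :=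
    (Matrix.IsHermitian.eigenvectorUnitary hC'.1).2
  set dg : Matrix (Fin n) (Fin n) ℂ → (Fin n → ℝ) :=
    fun H => (fun i => ((star W * H * W) i i).re) with hdgdef
  -- diagonal of conjugated C equals its eigenvalues
  have hdC : dg (a • A + b • B) = hC'.1.eigenvalues := by
    have hWCW : star W * (a • A + b • B) * W
        = Matrix.diagonal (RCLike.ofReal ∘ hC'.1.eigenvalues) := by
      conv_lhs => rw [hC'.1.spectral_theorem, Unitary.conjStarAlgAut_apply]
      rw [show ((Matrix.IsHermitian.eigenvectorUnitary hC'.1 : Matrix (Fin n) (Fin n) ℂ)) = W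
        from rfl]
      have h2 : star W * W = 1 := Matrix.mem_unitaryGroup_iff'.mp hW
      calc star W * (W * Matrix.diagonal (RCLike.ofReal ∘ hC'.1.eigenvalues) * star W) * W
          = (star W * W) * Matrix.diagonal (RCLike.ofReal ∘ hC'.1.eigenvalues)
            * (star W * W) := by
            simp only [Matrix.mul_assoc]
        _ = Matrix.diagonal (RCLike.ofReal ∘ hC'.1.eigenvalues) := by
            rw [h2, one_mul, mul_one]
    funext i
    simp only [hdgdef, hWCW, Matrix.diagonal_apply_eq, Function.comp_apply]
    simp [RCLike.ofReal_alg]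
  -- linearity of the diagonal map
  have hdlin : dg (a • A + b • B) = a • dg A + b • dg B := by
    funext i
    simp only [hdgdef, Pi.add_apply, Pi.smul_apply, smul_eq_mul]
    have hexp : star W * (a • A + b • B) * W
        = a • (star W * A * W) + b • (star W * B * W) := by
      rw [Matrix.mul_add, Matrix.add_mul]
      congr 1
      · rw [hsmulC, hsmulC, Matrix.mul_smul, Matrix.smul_mul]
      · rw [hsmulC, hsmulC, Matrix.mul_smul, Matrix.smul_mul]
    rw [hexp]
    simp only [Matrix.add_apply, Pi.smul_apply, Matrix.smul_apply, Complex.add_re,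
      Complex.real_smul, Complex.mul_re, Complex.ofReal_re, Complex.ofReal_im]
    ring
  -- concavity step
  have hconc : a • ψ (dg A) + b • ψ (dg B) ≤ ψ (a • dg A + b • dg B) :=
    hψ.2 (Set.mem_univ _) (Set.mem_univ _) ha hb hab
  -- Schur-Horn step
  have hSA : ψ hA'.1.eigenvalues ≤ ψ (dg A) :=
    KT.g_eigenvalues_le_g_diag ψ hψ hψsym hW hA'.1
  have hSB : ψ hB'.1.eigenvalues ≤ ψ (dg B) :=
    KT.g_eigenvalues_le_g_diag ψ hψ hψsym hW hB'.1
  calc a • ψ hA'.1.eigenvalues + b • ψ hB'.1.eigenvalues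
      ≤ a • ψ (dg A) + b • ψ (dg B) := by
        exact add_le_add (smul_le_smul_of_nonneg_left hSA ha)
          (smul_le_smul_of_nonneg_left hSB hb)
    _ ≤ ψ (a • dg A + b • dg B) := hconc
    _ = ψ hC'.1.eigenvalues := by rw [← hdlin, hdC]
end
end

section
/- Eigenvalue-sum bounds via k-trace: for any Hermitian n×n matrix A, ∑_{i=1}^k λ_i(A) ≤ log tr_k[exp(A)] ≤ ∑_{i=1}^k λ_i(A) + log C(n,k), where λ_1(A) ≥ … ≥ λ_n(A) are the eigenvalues in decreasing order and C(n,k) is the binomial coefficient. -/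
noncomputable section
open scoped Matrix ComplexOrder

open Matrix Finset Polynomial

variable {n : ℕ}

lemma det_add_expand {R : Type*} [CommRing R] (A B : Matrix (Fin n) (Fin n) R) :
    (A + B).det = ∑ s : Finset (Fin n),
      (Matrix.of fun i j => if i ∈ s then A i j else B i j).det := by
  have h := (detRowAlternating (R := R) (n := Fin n)).map_add_univ
      (fun i => A i) (fun i => B i)
  have h2 : (fun i => A i) + (fun i => B i) = fun i => (A + B) i := rfl
  rw [h2] at h
  refine h.trans (Finset.sum_congr rfl fun s _ => ?_)
  show detRowAlternating _ = detRowAlternating _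
  congr 1
  ext i j
  by_cases hi : i ∈ s <;> simp [Finset.piecewise, hi]

lemma det_ite_one {R : Type*} [CommRing R] (M : Matrix (Fin n) (Fin n) R) (s : Finset (Fin n)) :
    (Matrix.of fun i j => if i ∈ s then M i j else (1 : Matrix (Fin n) (Fin n) R) i j).det
      = (M.submatrix (Subtype.val : {i : Fin n // i ∈ s} → Fin n)
          (Subtype.val : {i : Fin n // i ∈ s} → Fin n)).det := by
  classical
  let e : {i : Fin n // i ∈ s} ⊕ {i : Fin n // ¬ i ∈ s} ≃ Fin n := Equiv.sumCompl _
  rw [← Matrix.det_submatrix_equiv_self e]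
  have : (Matrix.of fun i j => if i ∈ s then M i j else (1 : Matrix (Fin n) (Fin n) R) i j).submatrix e e
      = Matrix.fromBlocks
          (M.submatrix (Subtype.val : {i : Fin n // i ∈ s} → Fin n) Subtype.val)
          (M.submatrix Subtype.val (Subtype.val : {i : Fin n // ¬ i ∈ s} → Fin n))
          0 (1 : Matrix {i : Fin n // ¬ i ∈ s} {i : Fin n // ¬ i ∈ s} R) := by
    ext i j
    cases i with
    | inl a =>
      cases j with
      | inl b => simp [e, a.2]
      | inr b => simp [e, a.2]
    | inr a =>
      cases j with
      | inl b =>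
        have : (a : Fin n) ≠ (b : Fin n) := fun h => a.2 (h ▸ b.2)
        simp [e, a.2, Matrix.one_apply, this]
      | inr b =>
        simp [e, a.2, Matrix.one_apply, Subtype.ext_iff]
  rw [this, Matrix.det_fromBlocks_zero₂₁, Matrix.det_one, mul_one]

/-- the characteristic-polynomial-style expansion -/
lemma det_X_smul_one_sub (M : Matrix (Fin n) (Fin n) ℂ) :
    ((Polynomial.X : ℂ[X]) • (1 : Matrix (Fin n) (Fin n) ℂ[X]) - M.map Polynomial.C).det
      = ∑ s : Finset (Fin n),
          Polynomial.X ^ s.card * (-1 : ℂ[X]) ^ (n - s.card)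
            * Polynomial.C ((M.submatrix
                (Subtype.val : {i : Fin n // i ∈ sᶜ} → Fin n)
                (Subtype.val : {i : Fin n // i ∈ sᶜ} → Fin n)).det) := by
  classical
  rw [sub_eq_add_neg, det_add_expand]
  refine Finset.sum_congr rfl fun s _ => ?_
  have hrw : (Matrix.of fun i j => if i ∈ s then ((Polynomial.X : ℂ[X]) • (1 : Matrix (Fin n) (Fin n) ℂ[X])) i j
        else (-(M.map Polynomial.C)) i j)
      = Matrix.of (fun i => (if i ∈ s then (Polynomial.X : ℂ[X]) else -1) •
          (Matrix.of fun i j => if i ∈ sᶜ then (M.map Polynomial.C) i j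
            else (1 : Matrix (Fin n) (Fin n) ℂ[X]) i j) i) := by
    ext i j
    by_cases hi : i ∈ s <;> simp [hi, Matrix.smul_apply]
  rw [hrw]
  have hdet := (detRowAlternating (R := ℂ[X]) (n := Fin n)).map_smul_univ
      (fun i => if i ∈ s then (Polynomial.X : ℂ[X]) else -1)
      (fun i => (Matrix.of fun i j => if i ∈ sᶜ then (M.map Polynomial.C) i j
            else (1 : Matrix (Fin n) (Fin n) ℂ[X]) i j) i)
  have : (Matrix.of (fun i => (if i ∈ s then (Polynomial.X : ℂ[X]) else -1) •
          (Matrix.of fun i j => if i ∈ sᶜ then (M.map Polynomial.C) i j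
            else (1 : Matrix (Fin n) (Fin n) ℂ[X]) i j) i)).det
      = (∏ i : Fin n, (if i ∈ s then (Polynomial.X : ℂ[X]) else -1)) •
          (Matrix.of fun i j => if i ∈ sᶜ then (M.map Polynomial.C) i j
            else (1 : Matrix (Fin n) (Fin n) ℂ[X]) i j).det := hdet
  rw [this, det_ite_one]
  have hprod : (∏ i : Fin n, (if i ∈ s then (Polynomial.X : ℂ[X]) else -1))
      = Polynomial.X ^ s.card * (-1 : ℂ[X]) ^ (n - s.card) := by
    rw [Finset.prod_ite, Finset.prod_const, Finset.prod_const]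
    congr 2
    · simp
    · have h1 : Finset.filter (fun x => x ∉ s) Finset.univ = sᶜ := by ext i; simp
      rw [h1, Finset.card_compl, Fintype.card_fin]
  rw [hprod, smul_eq_mul]
  congr 1
  exact ((Polynomial.C : ℂ →+* ℂ[X]).map_det
    (M.submatrix (Subtype.val : {i : Fin n // i ∈ sᶜ} → Fin n)
      (Subtype.val : {i : Fin n // i ∈ sᶜ} → Fin n))).symm

lemma trK_eq_coeff {k : ℕ} (hkn : k ≤ n) (M : Matrix (Fin n) (Fin n) ℂ) :
    trK k M = (-1 : ℂ) ^ k *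
      (((Polynomial.X : ℂ[X]) • (1 : Matrix (Fin n) (Fin n) ℂ[X]) - M.map Polynomial.C).det).coeff (n - k) := by
  classical
  rw [det_X_smul_one_sub, Polynomial.finset_sum_coeff]
  have hterm : ∀ s : Finset (Fin n),
      (Polynomial.X ^ s.card * (-1 : ℂ[X]) ^ (n - s.card)
        * Polynomial.C ((M.submatrix (Subtype.val : {i : Fin n // i ∈ sᶜ} → Fin n) Subtype.val).det)).coeff (n - k)
      = if s.card = n - k then
          (-1 : ℂ) ^ (n - s.card) *
            (M.submatrix (Subtype.val : {i : Fin n // i ∈ sᶜ} → Fin n) Subtype.val).det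
        else 0 := by
    intro s
    have : (Polynomial.X ^ s.card * (-1 : ℂ[X]) ^ (n - s.card)
        * Polynomial.C ((M.submatrix (Subtype.val : {i : Fin n // i ∈ sᶜ} → Fin n) Subtype.val).det))
        = Polynomial.C ((-1 : ℂ) ^ (n - s.card) *
            (M.submatrix (Subtype.val : {i : Fin n // i ∈ sᶜ} → Fin n) Subtype.val).det)
          * Polynomial.X ^ s.card := by
      simp only [Polynomial.C_mul, Polynomial.C_pow, Polynomial.C_neg, Polynomial.C_1]
      ring
    rw [this, Polynomial.coeff_C_mul, Polynomial.coeff_X_pow]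
    by_cases h : s.card = n - k
    · simp [h]
    · simp [Ne.symm h, h]
  simp_rw [hterm]
  rw [← Finset.sum_filter]
  have hfilter : (Finset.univ.filter fun s : Finset (Fin n) => s.card = n - k)
      = Finset.powersetCard (n - k) Finset.univ := by
    ext s; simp [Finset.mem_powersetCard_univ]
  rw [hfilter]
  have hstep : ∑ s ∈ Finset.powersetCard (n - k) (Finset.univ : Finset (Fin n)),
      (-1 : ℂ) ^ (n - s.card) *
        (M.submatrix (Subtype.val : {i : Fin n // i ∈ sᶜ} → Fin n) Subtype.val).det
      = (-1 : ℂ) ^ k * trK k M := by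
    rw [trK, Finset.mul_sum]
    refine Finset.sum_bij' (fun s _ => sᶜ) (fun t _ => tᶜ) ?_ ?_ ?_ ?_ ?_
    · intro s hs
      rw [Finset.mem_powersetCard_univ] at hs ⊢
      rw [Finset.card_compl, Fintype.card_fin, hs]
      omega
    · intro t ht
      rw [Finset.mem_powersetCard_univ] at ht ⊢
      rw [Finset.card_compl, Fintype.card_fin, ht]
    · intro s _; simp
    · intro t _; simp
    · intro s hs
      rw [Finset.mem_powersetCard_univ] at hs
      rw [hs]
      congr 2
      omega
  rw [hstep, ← mul_assoc, ← mul_pow]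
  simp
variable {n : ℕ}

lemma det_X_smul_one_sub_conj (u v M : Matrix (Fin n) (Fin n) ℂ) (huv : u * v = 1) :
    ((Polynomial.X : ℂ[X]) • (1 : Matrix (Fin n) (Fin n) ℂ[X]) - (u * M * v).map Polynomial.C).det
      = ((Polynomial.X : ℂ[X]) • (1 : Matrix (Fin n) (Fin n) ℂ[X]) - M.map Polynomial.C).det := by
  have huv' : (u.map Polynomial.C) * (v.map Polynomial.C) = (1 : Matrix (Fin n) (Fin n) ℂ[X]) := by
    rw [← Matrix.map_mul, huv, Matrix.map_one _ Polynomial.C_0 Polynomial.C_1]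
  have h1 : (Polynomial.X : ℂ[X]) • (1 : Matrix (Fin n) (Fin n) ℂ[X]) - (u * M * v).map Polynomial.C
      = (u.map Polynomial.C) *
          ((Polynomial.X : ℂ[X]) • (1 : Matrix (Fin n) (Fin n) ℂ[X]) - M.map Polynomial.C) *
          (v.map Polynomial.C) := by
    rw [Matrix.mul_sub, Matrix.sub_mul]
    congr 1
    · rw [Matrix.mul_smul, Matrix.mul_one, Matrix.smul_mul, huv']
    · rw [Matrix.map_mul, Matrix.map_mul, Matrix.mul_assoc]
  rw [h1, Matrix.det_mul, Matrix.det_mul]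
  have h2 : (u.map Polynomial.C).det * (v.map Polynomial.C).det = 1 := by
    rw [← Matrix.det_mul, huv', Matrix.det_one]
  rw [mul_right_comm, h2, one_mul]

lemma trK_diagonal (k : ℕ) (d : Fin n → ℂ) :
    trK k (Matrix.diagonal d)
      = ∑ s ∈ Finset.powersetCard k (Finset.univ : Finset (Fin n)), ∏ i ∈ s, d i := by
  rw [trK]
  refine Finset.sum_congr rfl fun s _ => ?_
  have h : (Matrix.diagonal d).submatrix (Subtype.val : {i : Fin n // i ∈ s} → Fin n) Subtype.val
      = Matrix.diagonal (fun i : {i : Fin n // i ∈ s} => d i) := by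
    ext i j
    by_cases hij : i = j
    · simp [hij, Matrix.diagonal_apply_eq]
    · rw [Matrix.submatrix_apply, Matrix.diagonal_apply_ne _ (fun hh => hij (Subtype.ext hh)),
        Matrix.diagonal_apply_ne _ hij]
  rw [h, Matrix.det_diagonal]
  exact Finset.prod_coe_sort s d

lemma strictMono_fin_le {k : ℕ} (f : Fin k → ℕ) (hf : StrictMono f) (a : Fin k) :
    (a : ℕ) ≤ f a := by
  obtain ⟨m, hm⟩ := a
  induction m with
  | zero => exact Nat.zero_le _
  | succ p ih =>
    have h1 : (⟨p, Nat.lt_of_succ_lt hm⟩ : Fin k) < ⟨p + 1, hm⟩ := by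
      simp [Fin.lt_def]
    have h2 := hf h1
    have h3 : p ≤ f ⟨p, Nat.lt_of_succ_lt hm⟩ := ih (Nat.lt_of_succ_lt hm)
    show p + 1 ≤ f ⟨p + 1, hm⟩
    omega

lemma filter_lt_eq_map {k : ℕ} (hkn : k ≤ n) :
    Finset.univ.filter (fun i : Fin n => (i : ℕ) < k)
      = (Finset.univ : Finset (Fin k)).map (Fin.castLEEmb hkn) := by
  ext i
  simp only [Finset.mem_filter, Finset.mem_univ, true_and, Finset.mem_map,
    Fin.castLEEmb_apply]
  constructor
  · intro hi
    exact ⟨⟨(i : ℕ), hi⟩, Fin.ext rfl⟩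
  · rintro ⟨a, rfl⟩
    simpa using a.2

lemma sum_le_sorted_topk {k : ℕ} (hkn : k ≤ n) (f : Fin n → ℝ) (σ : Equiv.Perm (Fin n))
    (hσ : ∀ i j : Fin n, i ≤ j → f (σ j) ≤ f (σ i)) (s : Finset (Fin n)) (hs : s.card = k) :
    ∑ i ∈ s, f i ≤ ∑ i ∈ Finset.univ.filter (fun i : Fin n => (i : ℕ) < k), f (σ i) := by
  classical
  set T : Finset (Fin n) := s.image σ.symm with hT
  have hTcard : T.card = k := by
    rw [hT, Finset.card_image_of_injective _ σ.symm.injective, hs]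
  have hLHS : ∑ i ∈ s, f i = ∑ j ∈ T, f (σ j) := by
    rw [hT, Finset.sum_image (fun a _ b _ h => σ.symm.injective h)]
    simp
  have hg : (Finset.univ : Finset (Fin k)).image (T.orderEmbOfFin hTcard) = T := by
    apply Finset.coe_injective
    rw [Finset.coe_image, Finset.coe_univ, Set.image_univ, Finset.range_orderEmbOfFin]
  have hRHS : ∑ i ∈ Finset.univ.filter (fun i : Fin n => (i : ℕ) < k), f (σ i)
      = ∑ a : Fin k, f (σ (Fin.castLE hkn a)) := by
    rw [filter_lt_eq_map hkn, Finset.sum_map]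
    rfl
  have hTsum : ∑ j ∈ T, f (σ j) = ∑ a : Fin k, f (σ (T.orderEmbOfFin hTcard a)) := by
    have h4 : ∑ j ∈ T, f (σ j)
        = ∑ j ∈ (Finset.univ.image (T.orderEmbOfFin hTcard)), f (σ j) := by rw [hg]
    rw [Finset.sum_image (fun a _ b _ h => (T.orderEmbOfFin hTcard).injective h)] at h4
    exact h4
  rw [hLHS, hTsum, hRHS]
  refine Finset.sum_le_sum fun a _ => ?_
  refine hσ _ _ ?_
  have hmono : StrictMono (fun a : Fin k => ((T.orderEmbOfFin hTcard a : Fin n) : ℕ)) := by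
    intro a b hab
    exact (T.orderEmbOfFin hTcard).strictMono hab
  have := strictMono_fin_le _ hmono a
  exact this

section Aux
open Matrix Finset Polynomial

variable {n : ℕ}

lemma trK_conj {k : ℕ} (hkn : k ≤ n) (u v M : Matrix (Fin n) (Fin n) ℂ) (huv : u * v = 1) :
    trK k (u * M * v) = trK k M := by
  rw [trK_eq_coeff hkn, trK_eq_coeff hkn, det_X_smul_one_sub_conj u v M huv]

lemma trK_mexp (k : ℕ) (hkn : k ≤ n) (A : Matrix (Fin n) (Fin n) ℂ) (hA : A.IsHermitian) :
    trK k (mexp A)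
      = ∑ s ∈ Finset.powersetCard k (Finset.univ : Finset (Fin n)),
          ∏ i ∈ s, (algebraMap ℝ ℂ) (Real.exp (hA.eigenvalues i)) := by
  have h1 : mexp A = (hA.eigenvectorUnitary : Matrix (Fin n) (Fin n) ℂ)
      * Matrix.diagonal (RCLike.ofReal ∘ Real.exp ∘ hA.eigenvalues)
      * star (hA.eigenvectorUnitary : Matrix (Fin n) (Fin n) ℂ) := by
    rw [mexp, hA.cfc_eq Real.exp, Matrix.IsHermitian.cfc, Unitary.conjStarAlgAut_apply]
  rw [h1, trK_conj hkn _ _ _ ((Matrix.mem_unitaryGroup_iff).mp (hA.eigenvectorUnitary).2),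
    trK_diagonal]
  rfl

lemma exp_sum_le_trKsum {k : ℕ} (hkn : k ≤ n) (lam : Fin n → ℝ) (σ : Equiv.Perm (Fin n)) :
    Real.exp (∑ i ∈ Finset.univ.filter (fun i : Fin n => (i : ℕ) < k), lam (σ i))
      ≤ ∑ s ∈ Finset.powersetCard k (Finset.univ : Finset (Fin n)),
          ∏ i ∈ s, Real.exp (lam i) := by
  classical
  have hfiltercard : (Finset.univ.filter (fun i : Fin n => (i : ℕ) < k)).card = k := by
    rw [filter_lt_eq_map hkn, Finset.card_map, Finset.card_univ, Fintype.card_fin]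
  set s₀ : Finset (Fin n) := (Finset.univ.filter (fun i : Fin n => (i : ℕ) < k)).image σ with hs₀
  have hmem : s₀ ∈ Finset.powersetCard k (Finset.univ : Finset (Fin n)) := by
    rw [Finset.mem_powersetCard_univ, hs₀,
      Finset.card_image_of_injective _ σ.injective, hfiltercard]
  have hterm : ∏ i ∈ s₀, Real.exp (lam i)
      = Real.exp (∑ i ∈ Finset.univ.filter (fun i : Fin n => (i : ℕ) < k), lam (σ i)) := by
    rw [hs₀, Finset.prod_image (fun a _ b _ h => σ.injective h), Real.exp_sum]
  rw [← hterm]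
  exact Finset.single_le_sum (f := fun s => ∏ i ∈ s, Real.exp (lam i))
    (fun s _ => Finset.prod_nonneg fun i _ => (Real.exp_pos _).le) hmem

lemma trKsum_le_choose_mul {k : ℕ} (hkn : k ≤ n) (lam : Fin n → ℝ) (σ : Equiv.Perm (Fin n))
    (hσ : ∀ i j : Fin n, i ≤ j → lam (σ j) ≤ lam (σ i)) :
    ∑ s ∈ Finset.powersetCard k (Finset.univ : Finset (Fin n)), ∏ i ∈ s, Real.exp (lam i)
      ≤ (n.choose k : ℝ) *
          Real.exp (∑ i ∈ Finset.univ.filter (fun i : Fin n => (i : ℕ) < k), lam (σ i)) := by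
  classical
  have hb : ∀ s ∈ Finset.powersetCard k (Finset.univ : Finset (Fin n)),
      ∏ i ∈ s, Real.exp (lam i)
        ≤ Real.exp (∑ i ∈ Finset.univ.filter (fun i : Fin n => (i : ℕ) < k), lam (σ i)) := by
    intro s hs
    rw [Finset.mem_powersetCard_univ] at hs
    rw [← Real.exp_sum]
    exact Real.exp_le_exp.mpr (sum_le_sorted_topk hkn lam σ hσ s hs)
  calc ∑ s ∈ Finset.powersetCard k (Finset.univ : Finset (Fin n)), ∏ i ∈ s, Real.exp (lam i)
      ≤ (Finset.powersetCard k (Finset.univ : Finset (Fin n))).card •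
          Real.exp (∑ i ∈ Finset.univ.filter (fun i : Fin n => (i : ℕ) < k), lam (σ i)) :=
        Finset.sum_le_card_nsmul _ _ _ hb
    _ = _ := by
        rw [Finset.card_powersetCard, Finset.card_univ, Fintype.card_fin, nsmul_eq_mul]

end Aux

/-- bounds on the sum of the k largest eigenvalues via the
k-trace of the matrix exponential. Here `σ` sorts the eigenvalues in
decreasing order. -/
theorem ktrace_eigenvalue_sum_bounds {n k : ℕ} (hk : 1 ≤ k) (hkn : k ≤ n)
    (A : Matrix (Fin n) (Fin n) ℂ) (hA : A.IsHermitian)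
    (σ : Equiv.Perm (Fin n))
    (hσ : ∀ i j : Fin n, i ≤ j → hA.eigenvalues (σ j) ≤ hA.eigenvalues (σ i)) :
    (∑ i ∈ Finset.univ.filter (fun i : Fin n => (i : ℕ) < k),
        hA.eigenvalues (σ i)) ≤ Real.log (trK k (mexp A)).re ∧
    Real.log (trK k (mexp A)).re ≤
      (∑ i ∈ Finset.univ.filter (fun i : Fin n => (i : ℕ) < k),
        hA.eigenvalues (σ i)) + Real.log (n.choose k) := by
  classical
  have hre : (trK k (mexp A)).re
      = ∑ s ∈ Finset.powersetCard k (Finset.univ : Finset (Fin n)),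
          ∏ i ∈ s, Real.exp (hA.eigenvalues i) := by
    rw [trK_mexp k hkn A hA]
    have h2 : ∑ s ∈ Finset.powersetCard k (Finset.univ : Finset (Fin n)),
        ∏ i ∈ s, (algebraMap ℝ ℂ) (Real.exp (hA.eigenvalues i))
        = (algebraMap ℝ ℂ) (∑ s ∈ Finset.powersetCard k (Finset.univ : Finset (Fin n)),
            ∏ i ∈ s, Real.exp (hA.eigenvalues i)) := by
      rw [map_sum]
      exact Finset.sum_congr rfl fun s _ => (map_prod _ _ _).symm
    rw [h2]
    exact Complex.ofReal_re _
  have hlow := exp_sum_le_trKsum hkn hA.eigenvalues σ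
  have hup := trKsum_le_choose_mul hkn hA.eigenvalues σ hσ
  have hSpos : 0 < ∑ s ∈ Finset.powersetCard k (Finset.univ : Finset (Fin n)),
      ∏ i ∈ s, Real.exp (hA.eigenvalues i) := lt_of_lt_of_le (Real.exp_pos _) hlow
  have hchoosepos : (0 : ℝ) < (n.choose k : ℝ) := by
    exact_mod_cast Nat.choose_pos hkn
  constructor
  · rw [hre]
    calc ∑ i ∈ Finset.univ.filter (fun i : Fin n => (i : ℕ) < k), hA.eigenvalues (σ i)
        = Real.log (Real.exp (∑ i ∈ Finset.univ.filter (fun i : Fin n => (i : ℕ) < k),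
            hA.eigenvalues (σ i))) := (Real.log_exp _).symm
      _ ≤ _ := Real.log_le_log (Real.exp_pos _) hlow
  · rw [hre]
    calc Real.log (∑ s ∈ Finset.powersetCard k (Finset.univ : Finset (Fin n)),
          ∏ i ∈ s, Real.exp (hA.eigenvalues i))
        ≤ Real.log ((n.choose k : ℝ) *
            Real.exp (∑ i ∈ Finset.univ.filter (fun i : Fin n => (i : ℕ) < k),
              hA.eigenvalues (σ i))) := Real.log_le_log hSpos hup
      _ = _ := by
          rw [Real.log_mul (ne_of_gt hchoosepos) (Real.exp_ne_zero _), Real.log_exp, add_comm]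
end
end

section
/- Let C be a convex cone in a real vector space and f : C → [0, ∞) positively homogeneous of order 1 (f(λx) = λ f(x) for λ > 0). Then for s ∈ (0,1), f is concave if and only if f^s is concave; and for s ∈ (1, ∞), f is convex if and only if f^s is convex. -/
open Set Filter

private lemma tendsto_aux (s v : ℝ) :
    Filter.Tendsto (fun a : ℝ => (1 - a) ^ (1 - s) * v) (nhdsWithin 0 (Set.Ioi 0)) (nhds v) := by
  have h1 : ContinuousAt (fun a : ℝ => (1 - a) ^ (1 - s) * v) 0 := by
    apply ContinuousAt.mul _ continuousAt_const
    exact (Real.continuousAt_rpow_const (1 - 0) (1 - s) (Or.inl (by norm_num))).comp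
      ((continuous_const.sub continuous_id).continuousAt)
  have h2 : Filter.Tendsto (fun a : ℝ => (1 - a) ^ (1 - s) * v) (nhdsWithin 0 (Set.Ioi 0))
      (nhds ((1 - (0:ℝ)) ^ (1 - s) * v)) := h1.tendsto.mono_left nhdsWithin_le_nhds
  simpa [Real.one_rpow] using h2

section Key
variable {V : Type*} [AddCommGroup V] [Module ℝ V]

private lemma key_concave (C : Set V) (hC : Convex ℝ C)
    (hcone : ∀ x ∈ C, ∀ l : ℝ, 0 < l → l • x ∈ C)
    (f : V → ℝ) (hf0 : ∀ x ∈ C, 0 ≤ f x)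
    (hhom : ∀ x ∈ C, ∀ l : ℝ, 0 < l → f (l • x) = l * f x)
    {s : ℝ} (hs0 : 0 < s) (hs1 : s ≤ 1) :
    ConcaveOn ℝ C (fun x => f x ^ s) ↔ ∀ x ∈ C, ∀ y ∈ C, f x + f y ≤ f (x + y) := by
  have hadd : ∀ x ∈ C, ∀ y ∈ C, x + y ∈ C := by
    intro x hx y hy
    have hmid : (1/2 : ℝ) • x + (1/2 : ℝ) • y ∈ C := hC hx hy (by norm_num) (by norm_num) (by norm_num)
    have h2 : (2:ℝ) • ((1/2 : ℝ) • x + (1/2 : ℝ) • y) = x + y := by module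
    have := hcone _ hmid 2 two_pos
    rwa [h2] at this
  constructor
  · intro hcc
    -- degenerate helper
    have hdeg : ∀ x ∈ C, ∀ y ∈ C, f x = 0 → f y ≤ f (x + y) := by
      intro x hx y hy hfx
      have hxyC : x + y ∈ C := hadd x hx y hy
      have key : ∀ a : ℝ, a ∈ Set.Ioo (0:ℝ) 1 → (1 - a) ^ (1 - s) * (f y) ^ s ≤ f (x + y) ^ s := by
        intro a ha
        have ha0 : 0 < a := ha.1
        have hb0 : 0 < 1 - a := by linarith [ha.2]
        have hp : a⁻¹ • x ∈ C := hcone x hx a⁻¹ (inv_pos.2 ha0)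
        have hq : (1-a)⁻¹ • y ∈ C := hcone y hy _ (inv_pos.2 hb0)
        have hsum : a • (a⁻¹ • x) + (1-a) • ((1-a)⁻¹ • y) = x + y := by
          rw [smul_smul, smul_smul, mul_inv_cancel₀ ha0.ne', mul_inv_cancel₀ hb0.ne',
            one_smul, one_smul]
        have hfp : f (a⁻¹ • x) = a⁻¹ * f x := hhom x hx _ (inv_pos.2 ha0)
        have hfq : f ((1-a)⁻¹ • y) = (1-a)⁻¹ * f y := hhom y hy _ (inv_pos.2 hb0)
        have hmain := hcc.2 hp hq ha0.le hb0.le (by ring)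
        rw [hsum] at hmain
        simp only [smul_eq_mul, hfp, hfq, hfx, mul_zero, Real.zero_rpow hs0.ne'] at hmain
        have hcalc : (1-a) * ((1-a)⁻¹ * f y) ^ s = (1-a) ^ (1-s) * (f y) ^ s := by
          rw [Real.mul_rpow (inv_nonneg.2 hb0.le) (hf0 y hy), Real.inv_rpow hb0.le,
            show (1:ℝ) - s = 1 + (-s) by ring, Real.rpow_add hb0, Real.rpow_one,
            Real.rpow_neg hb0.le]
          ring
        rw [hcalc] at hmain
        linarith
      have hev : ∀ᶠ a in nhdsWithin (0:ℝ) (Set.Ioi 0),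
          (1 - a) ^ (1 - s) * (f y) ^ s ≤ f (x + y) ^ s := by
        filter_upwards [Ioo_mem_nhdsGT (zero_lt_one (α := ℝ))] with a ha
        exact key a ha
      have hlim := le_of_tendsto (tendsto_aux s ((f y) ^ s)) hev
      exact (Real.rpow_le_rpow_iff (hf0 y hy) (hf0 _ hxyC) hs0).1 hlim
    intro x hx y hy
    have hxyC : x + y ∈ C := hadd x hx y hy
    rcases eq_or_lt_of_le (hf0 x hx) with hu | hu
    · have := hdeg x hx y hy hu.symm
      linarith
    rcases eq_or_lt_of_le (hf0 y hy) with hv | hv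
    · have := hdeg y hy x hx hv.symm
      rw [add_comm] at this
      linarith
    -- main positive case
    set u := f x with hu'
    set v := f y with hv'
    have hw : 0 < u + v := by linarith
    have hp : (((u+v)/u) • x) ∈ C := hcone x hx _ (div_pos hw hu)
    have hq : (((u+v)/v) • y) ∈ C := hcone y hy _ (div_pos hw hv)
    have hfp : f (((u+v)/u) • x) = u + v := by
      rw [hhom x hx _ (div_pos hw hu), ← hu', div_mul_cancel₀ _ hu.ne']
    have hfq : f (((u+v)/v) • y) = u + v := by
      rw [hhom y hy _ (div_pos hw hv), ← hv', div_mul_cancel₀ _ hv.ne']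
    have hab : u/(u+v) + v/(u+v) = 1 := by field_simp
    have e1 : u/(u+v) * ((u+v)/u) = 1 := by field_simp
    have e2 : v/(u+v) * ((u+v)/v) = 1 := by field_simp
    have hsum : (u/(u+v)) • (((u+v)/u) • x) + (v/(u+v)) • (((u+v)/v) • y) = x + y := by
      rw [smul_smul, smul_smul, e1, e2, one_smul, one_smul]
    have hmain := hcc.2 hp hq (div_pos hu hw).le (div_pos hv hw).le hab
    rw [hsum] at hmain
    simp only [smul_eq_mul, hfp, hfq] at hmain
    have : (u + v) ^ s ≤ f (x + y) ^ s := by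
      calc (u + v) ^ s = (u/(u+v) + v/(u+v)) * (u+v) ^ s := by rw [hab, one_mul]
        _ = u/(u+v) * (u+v)^s + v/(u+v) * (u+v)^s := by ring
        _ ≤ f (x + y) ^ s := hmain
    exact (Real.rpow_le_rpow_iff hw.le (hf0 _ hxyC) hs0).1 this
  · intro hsup
    refine ⟨hC, fun x hx y hy a b ha hb hab => ?_⟩
    rcases eq_or_lt_of_le ha with ha0 | ha0
    · have hb1 : b = 1 := by linarith
      simp [← ha0, hb1]
    rcases eq_or_lt_of_le hb with hb0 | hb0
    · have ha1 : a = 1 := by linarith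
      simp [← hb0, ha1]
    have hax : a • x ∈ C := hcone x hx a ha0
    have hby : b • y ∈ C := hcone y hy b hb0
    have h1 : a * f x + b * f y ≤ f (a • x + b • y) := by
      have := hsup _ hax _ hby
      rwa [hhom x hx a ha0, hhom y hy b hb0] at this
    have h2 : (a * f x + b * f y) ^ s ≤ f (a • x + b • y) ^ s :=
      Real.rpow_le_rpow (add_nonneg (mul_nonneg ha0.le (hf0 x hx)) (mul_nonneg hb0.le (hf0 y hy))) h1 hs0.le
    have h3 : a * (f x) ^ s + b * (f y) ^ s ≤ (a * f x + b * f y) ^ s := by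
      have := (Real.concaveOn_rpow hs0.le hs1).2 (Set.mem_Ici.2 (hf0 x hx))
        (Set.mem_Ici.2 (hf0 y hy)) ha hb hab
      simpa [smul_eq_mul] using this
    simp only [smul_eq_mul]
    linarith

private lemma key_convex (C : Set V) (hC : Convex ℝ C)
    (hcone : ∀ x ∈ C, ∀ l : ℝ, 0 < l → l • x ∈ C)
    (f : V → ℝ) (hf0 : ∀ x ∈ C, 0 ≤ f x)
    (hhom : ∀ x ∈ C, ∀ l : ℝ, 0 < l → f (l • x) = l * f x)
    {s : ℝ} (hs1 : 1 ≤ s) :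
    ConvexOn ℝ C (fun x => f x ^ s) ↔ ∀ x ∈ C, ∀ y ∈ C, f (x + y) ≤ f x + f y := by
  have hs0 : (0:ℝ) < s := lt_of_lt_of_le one_pos hs1
  have hadd : ∀ x ∈ C, ∀ y ∈ C, x + y ∈ C := by
    intro x hx y hy
    have hmid : (1/2 : ℝ) • x + (1/2 : ℝ) • y ∈ C := hC hx hy (by norm_num) (by norm_num) (by norm_num)
    have h2 : (2:ℝ) • ((1/2 : ℝ) • x + (1/2 : ℝ) • y) = x + y := by module
    have := hcone _ hmid 2 two_pos
    rwa [h2] at this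
  constructor
  · intro hcc
    have hdeg : ∀ x ∈ C, ∀ y ∈ C, f x = 0 → f (x + y) ≤ f y := by
      intro x hx y hy hfx
      have hxyC : x + y ∈ C := hadd x hx y hy
      have key : ∀ a : ℝ, a ∈ Set.Ioo (0:ℝ) 1 → f (x + y) ^ s ≤ (1 - a) ^ (1 - s) * (f y) ^ s := by
        intro a ha
        have ha0 : 0 < a := ha.1
        have hb0 : 0 < 1 - a := by linarith [ha.2]
        have hp : a⁻¹ • x ∈ C := hcone x hx a⁻¹ (inv_pos.2 ha0)
        have hq : (1-a)⁻¹ • y ∈ C := hcone y hy _ (inv_pos.2 hb0)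
        have hsum : a • (a⁻¹ • x) + (1-a) • ((1-a)⁻¹ • y) = x + y := by
          rw [smul_smul, smul_smul, mul_inv_cancel₀ ha0.ne', mul_inv_cancel₀ hb0.ne',
            one_smul, one_smul]
        have hfp : f (a⁻¹ • x) = a⁻¹ * f x := hhom x hx _ (inv_pos.2 ha0)
        have hfq : f ((1-a)⁻¹ • y) = (1-a)⁻¹ * f y := hhom y hy _ (inv_pos.2 hb0)
        have hmain := hcc.2 hp hq ha0.le hb0.le (by ring)
        rw [hsum] at hmain
        simp only [smul_eq_mul, hfp, hfq, hfx, mul_zero, Real.zero_rpow hs0.ne'] at hmain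
        have hcalc : (1-a) * ((1-a)⁻¹ * f y) ^ s = (1-a) ^ (1-s) * (f y) ^ s := by
          rw [Real.mul_rpow (inv_nonneg.2 hb0.le) (hf0 y hy), Real.inv_rpow hb0.le,
            show (1:ℝ) - s = 1 + (-s) by ring, Real.rpow_add hb0, Real.rpow_one,
            Real.rpow_neg hb0.le]
          ring
        rw [hcalc] at hmain
        linarith
      have hev : ∀ᶠ a in nhdsWithin (0:ℝ) (Set.Ioi 0),
          f (x + y) ^ s ≤ (1 - a) ^ (1 - s) * (f y) ^ s := by
        filter_upwards [Ioo_mem_nhdsGT (zero_lt_one (α := ℝ))] with a ha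
        exact key a ha
      have hlim := ge_of_tendsto (tendsto_aux s ((f y) ^ s)) hev
      exact (Real.rpow_le_rpow_iff (hf0 _ hxyC) (hf0 y hy) hs0).1 hlim
    intro x hx y hy
    have hxyC : x + y ∈ C := hadd x hx y hy
    rcases eq_or_lt_of_le (hf0 x hx) with hu | hu
    · have := hdeg x hx y hy hu.symm
      linarith
    rcases eq_or_lt_of_le (hf0 y hy) with hv | hv
    · have := hdeg y hy x hx hv.symm
      rw [add_comm] at this
      linarith
    set u := f x with hu'
    set v := f y with hv'
    have hw : 0 < u + v := by linarith
    have hp : (((u+v)/u) • x) ∈ C := hcone x hx _ (div_pos hw hu)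
    have hq : (((u+v)/v) • y) ∈ C := hcone y hy _ (div_pos hw hv)
    have hfp : f (((u+v)/u) • x) = u + v := by
      rw [hhom x hx _ (div_pos hw hu), ← hu', div_mul_cancel₀ _ hu.ne']
    have hfq : f (((u+v)/v) • y) = u + v := by
      rw [hhom y hy _ (div_pos hw hv), ← hv', div_mul_cancel₀ _ hv.ne']
    have hab : u/(u+v) + v/(u+v) = 1 := by field_simp
    have e1 : u/(u+v) * ((u+v)/u) = 1 := by field_simp
    have e2 : v/(u+v) * ((u+v)/v) = 1 := by field_simp
    have hsum : (u/(u+v)) • (((u+v)/u) • x) + (v/(u+v)) • (((u+v)/v) • y) = x + y := by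
      rw [smul_smul, smul_smul, e1, e2, one_smul, one_smul]
    have hmain := hcc.2 hp hq (div_pos hu hw).le (div_pos hv hw).le hab
    rw [hsum] at hmain
    simp only [smul_eq_mul, hfp, hfq] at hmain
    have : f (x + y) ^ s ≤ (u + v) ^ s := by
      calc f (x + y) ^ s ≤ u/(u+v) * (u+v)^s + v/(u+v) * (u+v)^s := hmain
        _ = (u/(u+v) + v/(u+v)) * (u+v) ^ s := by ring
        _ = (u + v) ^ s := by rw [hab, one_mul]
    exact (Real.rpow_le_rpow_iff (hf0 _ hxyC) hw.le hs0).1 this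
  · intro hsub
    refine ⟨hC, fun x hx y hy a b ha hb hab => ?_⟩
    rcases eq_or_lt_of_le ha with ha0 | ha0
    · have hb1 : b = 1 := by linarith
      simp [← ha0, hb1]
    rcases eq_or_lt_of_le hb with hb0 | hb0
    · have ha1 : a = 1 := by linarith
      simp [← hb0, ha1]
    have hax : a • x ∈ C := hcone x hx a ha0
    have hby : b • y ∈ C := hcone y hy b hb0
    have h1 : f (a • x + b • y) ≤ a * f x + b * f y := by
      have := hsub _ hax _ hby
      rwa [hhom x hx a ha0, hhom y hy b hb0] at this
    have h2 : f (a • x + b • y) ^ s ≤ (a * f x + b * f y) ^ s :=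
      Real.rpow_le_rpow (hf0 _ (hC hx hy ha hb hab)) h1 hs0.le
    have h3 : (a * f x + b * f y) ^ s ≤ a * (f x) ^ s + b * (f y) ^ s := by
      have := (convexOn_rpow hs1).2 (Set.mem_Ici.2 (hf0 x hx))
        (Set.mem_Ici.2 (hf0 y hy)) ha hb hab
      simpa [smul_eq_mul] using this
    simp only [smul_eq_mul]
    linarith

end Key

/-- for a nonnegative positively-1-homogeneous function on a
convex cone, concavity (resp. convexity) is equivalent to concavity of
`f^s` for `s ∈ (0,1)` (resp. convexity of `f^s` for `s > 1`). -/
theorem homogeneous_concave_convex_iff {V : Type*} [AddCommGroup V] [Module ℝ V]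
    (C : Set V) (hC : Convex ℝ C)
    (hcone : ∀ x ∈ C, ∀ l : ℝ, 0 < l → l • x ∈ C)
    (f : V → ℝ) (hf0 : ∀ x ∈ C, 0 ≤ f x)
    (hhom : ∀ x ∈ C, ∀ l : ℝ, 0 < l → f (l • x) = l * f x) :
    (∀ s : ℝ, s ∈ Set.Ioo (0 : ℝ) 1 →
      (ConcaveOn ℝ C f ↔ ConcaveOn ℝ C (fun x => f x ^ s))) ∧
    (∀ s : ℝ, 1 < s →
      (ConvexOn ℝ C f ↔ ConvexOn ℝ C (fun x => f x ^ s))) := by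
  have h1 : (fun x => f x ^ (1:ℝ)) = f := funext fun x => Real.rpow_one _
  constructor
  · intro s hs
    have hA : ConcaveOn ℝ C f ↔ ∀ x ∈ C, ∀ y ∈ C, f x + f y ≤ f (x + y) := by
      have := key_concave C hC hcone f hf0 hhom one_pos le_rfl
      rwa [h1] at this
    exact hA.trans (key_concave C hC hcone f hf0 hhom hs.1 hs.2.le).symm
  · intro s hs
    have hA : ConvexOn ℝ C f ↔ ∀ x ∈ C, ∀ y ∈ C, f (x + y) ≤ f x + f y := by
      have := key_convex C hC hcone f hf0 hhom le_rfl
      rwa [h1] at this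
    exact hA.trans (key_convex C hC hcone f hf0 hhom hs.le).symm
end
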